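/- arXiv:2201.10964 — 9 statements merged into one kernel-verified Lean document; each statement's English description precedes it below -/
import Mathlib

section
/- Let f be a polynomial in ℂ[x] with deg f ≥ 1. Then every solution (n, m, p, q) of the Pillai equation p^n − q^m = f, where n, m ≥ 2 are integers and p, q ∈ ℂ[x] are polynomials with deg p ≥ 1 and deg q ≥ 1, satisfies max{n, m, deg p, deg q} ≤ 4 + 12·deg f + 8·(deg f)². -/
open Polynomial UniqueFactorizationMonoid UniqueFactorizationDomain EuclideanDomain

theorem my_radical_dvd_radical {a b : ℂ[X]} (hab : a ∣ b) (hb : b ≠ 0) :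
    radical a ∣ radical b := by
  have ha : a ≠ 0 := fun h => hb (by simpa [h] using hab)
  have hle := (dvd_iff_normalizedFactors_le_normalizedFactors ha hb).mp hab
  unfold radical primeFactors
  refine Finset.prod_dvd_prod_of_subset _ _ id ?_
  intro x hx
  simp only [Multiset.mem_toFinset] at hx ⊢
  exact Multiset.subset_of_le hle hx

theorem pillai_polynomial_bound (f p q : ℂ[X]) (n m : ℕ)
    (hf : 1 ≤ f.natDegree) (hn : 2 ≤ n) (hm : 2 ≤ m)
    (hp : 1 ≤ p.natDegree) (hq : 1 ≤ q.natDegree)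
    (heq : p ^ n - q ^ m = f) :
    max (max n m) (max p.natDegree q.natDegree) ≤
      4 + 12 * f.natDegree + 8 * f.natDegree ^ 2 := by
  have hf0 : f ≠ 0 := fun h => by simp [h] at hf
  set d := f.natDegree with hd
  have hp0 : p ≠ 0 := fun h => by simp [h] at hp
  have hq0 : q ≠ 0 := fun h => by simp [h] at hq
  have hpn0 : p ^ n ≠ 0 := pow_ne_zero _ hp0
  have hqm0 : q ^ m ≠ 0 := pow_ne_zero _ hq0
  suffices hbound : n ≤ 12 * d ∧ m ≤ 12 * d ∧ p.natDegree ≤ 12 * d ∧ q.natDegree ≤ 12 * d by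
    have hdsq : 0 ≤ d ^ 2 := Nat.zero_le _
    simp only [max_le_iff]
    refine ⟨⟨?_, ?_⟩, ?_, ?_⟩ <;> nlinarith [hbound.1, hbound.2.1, hbound.2.2.1, hbound.2.2.2]
  by_cases h22 : n = 2 ∧ m = 2
  · -- case n = m = 2 : factor f = (p-q)(p+q)
    obtain ⟨hn2, hm2⟩ := h22
    subst hn2 hm2
    have key : (p - q) * (p + q) = f := by rw [← heq]; ring
    have hu : p - q ≠ 0 := fun h => hf0 (by rw [← key, h, zero_mul])
    have hv : p + q ≠ 0 := fun h => hf0 (by rw [← key, h, mul_zero])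
    have hsum : (p - q).natDegree + (p + q).natDegree = d := by
      rw [← natDegree_mul hu hv, key]
    have hpd : p.natDegree ≤ d := by
      have h2p : (C (2 : ℂ)) * p = (p - q) + (p + q) := by
        rw [map_ofNat]; ring
      have : ((C (2 : ℂ)) * p).natDegree = p.natDegree :=
        natDegree_C_mul (by norm_num)
      rw [← this, h2p]
      calc ((p - q) + (p + q)).natDegree ≤ max (p - q).natDegree (p + q).natDegree :=
            natDegree_add_le _ _
        _ ≤ d := max_le (by omega) (by omega)
    have hqd : q.natDegree ≤ d := by
      have h2q : (C (2 : ℂ)) * q = (p + q) - (p - q) := by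
        rw [map_ofNat]; ring
      have : ((C (2 : ℂ)) * q).natDegree = q.natDegree :=
        natDegree_C_mul (by norm_num)
      rw [← this, h2q]
      calc ((p + q) - (p - q)).natDegree ≤ max (p + q).natDegree (p - q).natDegree :=
            natDegree_sub_le _ _
        _ ≤ d := max_le (by omega) (by omega)
    omega
  · -- not both exponents are 2
    have hDpn : (p ^ n).natDegree = n * p.natDegree := natDegree_pow _ _
    have hDqm : (q ^ m).natDegree = m * q.natDegree := natDegree_pow _ _
    rcases lt_trichotomy (n * p.natDegree) (m * q.natDegree) with hlt | heqD | hgt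
    · -- degree of q^m dominates
      have : f.natDegree = m * q.natDegree := by
        rw [← heq, natDegree_sub_eq_right_of_natDegree_lt]
        · exact hDqm
        · rw [hDpn, hDqm]; exact hlt
      have h1 : n ≤ n * p.natDegree := Nat.le_mul_of_pos_right n hp
      have h2 : m ≤ m * q.natDegree := Nat.le_mul_of_pos_right m hq
      have h3 : q.natDegree ≤ m * q.natDegree := Nat.le_mul_of_pos_left _ (by omega)
      have h4 : p.natDegree ≤ n * p.natDegree := Nat.le_mul_of_pos_left _ (by omega)
      omega
    · -- equal degrees : the Mason–Stothers case
      by_cases hDd : n * p.natDegree ≤ d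
      · have h1 : n ≤ n * p.natDegree := Nat.le_mul_of_pos_right n hp
        have h2 : m ≤ m * q.natDegree := Nat.le_mul_of_pos_right m hq
        have h3 : q.natDegree ≤ m * q.natDegree := Nat.le_mul_of_pos_left _ (by omega)
        have h4 : p.natDegree ≤ n * p.natDegree := Nat.le_mul_of_pos_left _ (by omega)
        omega
      push_neg at hDd
      set g := GCDMonoid.gcd (p ^ n) (q ^ m) with hgdef
      have hg0 : g ≠ 0 := gcd_ne_zero_of_left hpn0
      set a := p ^ n / g with hadef
      set b := q ^ m / g with hbdef
      have hga : g * a = p ^ n := EuclideanDomain.mul_div_cancel' hg0 (GCDMonoid.gcd_dvd_left _ _)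
      have hgb : g * b = q ^ m := EuclideanDomain.mul_div_cancel' hg0 (GCDMonoid.gcd_dvd_right _ _)
      have hab : IsCoprime a b := isCoprime_div_gcd_div_gcd hqm0
      set c := a - b with hcdef
      have hgc : g * c = f := by rw [hcdef, mul_sub, hga, hgb, heq]
      have ha0 : a ≠ 0 := fun h => hpn0 (by rw [← hga, h, mul_zero])
      have hb0 : b ≠ 0 := fun h => hqm0 (by rw [← hgb, h, mul_zero])
      have hc0 : c ≠ 0 := fun h => hf0 (by rw [← hgc, h, mul_zero])
      have hdegga : g.natDegree + a.natDegree = n * p.natDegree := by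
        rw [← hDpn, ← hga, natDegree_mul hg0 ha0]
      have hdeggc : g.natDegree + c.natDegree = d := by
        rw [hd, ← hgc, natDegree_mul hg0 hc0]
      have hdeggb : g.natDegree + b.natDegree = m * q.natDegree := by
        rw [← hDqm, ← hgb, natDegree_mul hg0 hb0]
      -- pairwise coprimality
      obtain ⟨u, v, huv⟩ := id hab
      have hbc : IsCoprime b c := ⟨u + v, u, by rw [hcdef]; linear_combination huv⟩
      have hca : IsCoprime c a := ⟨-v, u + v, by rw [hcdef]; linear_combination huv⟩
      -- Mason–Stothers
      have hsum : a + -b + -c = 0 := by rw [hcdef]; ring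
      rcases Polynomial.abc ha0 (neg_ne_zero.mpr hb0) (neg_ne_zero.mpr hc0)
        hab.neg_right hsum with hmain | hder
      · obtain ⟨hA, -, -⟩ := hmain
        have hprod : a * -b * -c = a * b * c := by ring
        rw [hprod] at hA
        have hradmul : radical (a * b * c) = radical a * radical b * radical c := by
          rw [radical_mul (hca.symm.mul_left hbc).isRelPrime, radical_mul hab.isRelPrime]
        rw [hradmul] at hA
        have hra0 : radical a ≠ 0 := radical_ne_zero (a := a)
        have hrb0 : radical b ≠ 0 := radical_ne_zero (a := b)
        have hrc0 : radical c ≠ 0 := radical_ne_zero (a := c)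
        rw [natDegree_mul (mul_ne_zero hra0 hrb0) hrc0, natDegree_mul hra0 hrb0] at hA
        have hra : (radical a).natDegree ≤ p.natDegree := by
          have h1 : radical a ∣ radical (p ^ n) :=
            my_radical_dvd_radical ⟨g, by rw [← hga]; ring⟩ hpn0
          rw [radical_pow p (by omega : n ≠ 0)] at h1
          exact natDegree_le_of_dvd (h1.trans (radical_dvd_self (a := p))) hp0
        have hrb : (radical b).natDegree ≤ q.natDegree := by
          have h1 : radical b ∣ radical (q ^ m) :=
            my_radical_dvd_radical ⟨g, by rw [← hgb]; ring⟩ hqm0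
          rw [radical_pow q (by omega : m ≠ 0)] at h1
          exact natDegree_le_of_dvd (h1.trans (radical_dvd_self (a := q))) hq0
        have hrc : (radical c).natDegree ≤ c.natDegree :=
          natDegree_le_of_dvd (radical_dvd_self (a := c)) hc0
        -- main inequality: n * dp + 1 ≤ dp + dq + d
        have hkey : n * p.natDegree + 1 ≤ p.natDegree + q.natDegree + d := by omega
        -- finish with arithmetic
        have hcase : 3 ≤ n ∨ 3 ≤ m := by omega
        rcases hcase with h3 | h3
        · have e1 : 3 * p.natDegree ≤ n * p.natDegree := Nat.mul_le_mul_right _ h3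
          have e2 : 2 * q.natDegree ≤ m * q.natDegree := Nat.mul_le_mul_right _ hm
          have h1 : n ≤ n * p.natDegree := Nat.le_mul_of_pos_right n hp
          have h2 : m ≤ m * q.natDegree := Nat.le_mul_of_pos_right m hq
          have h3 : q.natDegree ≤ m * q.natDegree := Nat.le_mul_of_pos_left _ (by omega)
          have h4 : p.natDegree ≤ n * p.natDegree := Nat.le_mul_of_pos_left _ (by omega)
          omega
        · have e1 : 3 * q.natDegree ≤ m * q.natDegree := Nat.mul_le_mul_right _ h3
          have e2 : 2 * p.natDegree ≤ n * p.natDegree := Nat.mul_le_mul_right _ hn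
          have h1 : n ≤ n * p.natDegree := Nat.le_mul_of_pos_right n hp
          have h2 : m ≤ m * q.natDegree := Nat.le_mul_of_pos_right m hq
          have h3 : q.natDegree ≤ m * q.natDegree := Nat.le_mul_of_pos_left _ (by omega)
          have h4 : p.natDegree ≤ n * p.natDegree := Nat.le_mul_of_pos_left _ (by omega)
          omega
      · -- derivative-zero case is impossible since deg a > 0
        exfalso
        obtain ⟨hda, -, -⟩ := hder
        have : a = C (a.coeff 0) := eq_C_of_derivative_eq_zero hda
        have hadeg : a.natDegree = 0 := by rw [this]; exact natDegree_C _
        have hgf : g ∣ f := ⟨c, hgc.symm⟩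
        have : g.natDegree ≤ d := natDegree_le_of_dvd hgf hf0
        omega
    · -- degree of p^n dominates
      have : f.natDegree = n * p.natDegree := by
        rw [← heq, natDegree_sub_eq_left_of_natDegree_lt]
        · exact hDpn
        · rw [hDpn, hDqm]; exact hgt
      have h1 : n ≤ n * p.natDegree := Nat.le_mul_of_pos_right n hp
      have h2 : m ≤ m * q.natDegree := Nat.le_mul_of_pos_right m hq
      have h3 : q.natDegree ≤ m * q.natDegree := Nat.le_mul_of_pos_left _ (by omega)
      have h4 : p.natDegree ≤ n * p.natDegree := Nat.le_mul_of_pos_left _ (by omega)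
      omega
end

section
/- Let f be a polynomial in ℂ[x] with deg f ≥ 1. Then the set of vectors (n, m, deg p, deg q) ∈ ℕ⁴ arising from solutions (n, m, p, q) of the Pillai equation p^n − q^m = f, where n, m ≥ 2 are integers and p, q ∈ ℂ[x] are polynomials with deg p ≥ 1 and deg q ≥ 1, is finite. -/
open Polynomial UniqueFactorizationMonoid

namespace PillaiAux

lemma radical_dvd_radical_of_dvd {A B : ℂ[X]} (hA : A ≠ 0) (hB : B ≠ 0) (h : A ∣ B) :
    radical A ∣ radical B := by
  apply Finset.prod_dvd_prod_of_subset
  have hle := (UniqueFactorizationMonoid.dvd_iff_normalizedFactors_le_normalizedFactors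
    hA hB).mp h
  exact (@Multiset.toFinset_subset (ℂ[X]) (fun a b => Classical.propDecidable (a = b))
    _ _).mpr (Multiset.subset_of_le hle)

lemma natDegree_radical_le_of_dvd_pow {A p : ℂ[X]} (hp : p ≠ 0) (hA : A ≠ 0) {n : ℕ}
    (hn : 0 < n) (h : A ∣ p ^ n) : (radical A).natDegree ≤ p.natDegree := by
  have h1 : radical A ∣ radical (p ^ n) :=
    radical_dvd_radical_of_dvd hA (pow_ne_zero n hp) h
  rw [radical_pow p hn.ne'] at h1
  exact natDegree_le_of_dvd (h1.trans (radical_dvd_self (a := p))) hp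

/-- The Mason–Stothers case of the Pillai bound: equal top degrees, `3 ≤ n`. -/
lemma mason_case {f p q : ℂ[X]} {n m : ℕ} (hn : 3 ≤ n) (hm : 2 ≤ m)
    (hp : 1 ≤ p.natDegree) (hq : 1 ≤ q.natDegree) (hf : 1 ≤ f.natDegree)
    (hd : n * p.natDegree = m * q.natDegree)
    (heq : p ^ n - q ^ m = f) :
    n * p.natDegree ≤ 12 * f.natDegree := by
  classical
  have hf0 : f ≠ 0 := fun h => by simp [h] at hf
  have hp0 : p ≠ 0 := fun h => by simp [h] at hp
  have hq0 : q ≠ 0 := fun h => by simp [h] at hq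
  have hpn0 : p ^ n ≠ 0 := pow_ne_zero _ hp0
  have hqm0 : q ^ m ≠ 0 := pow_ne_zero _ hq0
  set g := gcd (p ^ n) (q ^ m) with hgdef
  have hg0 : g ≠ 0 := gcd_ne_zero_of_left hpn0
  set A := p ^ n / g with hAdef
  set B := q ^ m / g with hBdef
  have hA : g * A = p ^ n := EuclideanDomain.mul_div_cancel' hg0 (gcd_dvd_left _ _)
  have hB : g * B = q ^ m := EuclideanDomain.mul_div_cancel' hg0 (gcd_dvd_right _ _)
  have hA0 : A ≠ 0 := left_div_gcd_ne_zero hpn0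
  have hB0 : B ≠ 0 := right_div_gcd_ne_zero hqm0
  have hAB : IsCoprime A B := isCoprime_div_gcd_div_gcd hqm0
  have hgf : g ∣ f := heq ▸ dvd_sub (gcd_dvd_left _ _) (gcd_dvd_right _ _)
  obtain ⟨C, hC⟩ := hgf
  have hgf' : g ∣ f := ⟨C, hC⟩
  have hC0 : C ≠ 0 := by
    rintro rfl
    rw [mul_zero] at hC
    exact hf0 hC
  have hABC : A - B = C := by
    have h1 : g * (A - B) = g * C := by rw [mul_sub, hA, hB, heq, hC]
    exact mul_left_cancel₀ hg0 h1
  have hAC : IsCoprime A C := by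
    have h1 := hAB.neg_right.add_mul_left_right 1
    rwa [show -B + A * 1 = A - B by ring, hABC] at h1
  have hBC : IsCoprime B C := by
    have h1 := hAB.symm.add_mul_left_right (-1)
    rwa [show A + B * (-1) = A - B by ring, hABC] at h1
  -- degree bookkeeping
  have hdegg : g.natDegree ≤ f.natDegree := natDegree_le_of_dvd hgf' hf0
  have hdegA : g.natDegree + A.natDegree = n * p.natDegree := by
    rw [← natDegree_mul hg0 hA0, hA, natDegree_pow]
  have hdegB : g.natDegree + B.natDegree = m * q.natDegree := by
    rw [← natDegree_mul hg0 hB0, hB, natDegree_pow]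
  rcases Polynomial.abc hA0 (neg_ne_zero.mpr hB0) (neg_ne_zero.mpr hC0)
      hAB.neg_right
      (by rw [← hABC]; ring) with hmain | hderiv
  · obtain ⟨h1, -, -⟩ := hmain
    have hprod : A * -B * -C = A * B * C := by ring
    rw [hprod] at h1
    have hrad : radical (A * B * C) = radical A * radical B * radical C := by
      rw [UniqueFactorizationMonoid.radical_mul (hAC.mul_left hBC).isRelPrime,
        UniqueFactorizationMonoid.radical_mul hAB.isRelPrime]
    have hdeg_rad : (radical (A * B * C)).natDegree =
        (radical A).natDegree + (radical B).natDegree + (radical C).natDegree := by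
      rw [hrad, natDegree_mul (mul_ne_zero (radical_ne_zero (a := A)) (radical_ne_zero (a := B)))
        (radical_ne_zero (a := C)), natDegree_mul (radical_ne_zero (a := A)) (radical_ne_zero (a := B))]
    have hrA : (radical A).natDegree ≤ p.natDegree :=
      natDegree_radical_le_of_dvd_pow hp0 hA0 (n := n) (by omega) ⟨g, by rw [← hA, mul_comm]⟩
    have hrB : (radical B).natDegree ≤ q.natDegree :=
      natDegree_radical_le_of_dvd_pow hq0 hB0 (n := m) (by omega) ⟨g, by rw [← hB, mul_comm]⟩
    have hrC : (radical C).natDegree ≤ f.natDegree :=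
      natDegree_le_of_dvd ((radical_dvd_self (a := C)).trans ⟨g, by rw [hC, mul_comm]⟩) hf0
    rw [hdeg_rad] at h1
    -- now pure arithmetic
    have h3a : 3 * p.natDegree ≤ n * p.natDegree := Nat.mul_le_mul_right _ hn
    have h2b : 2 * q.natDegree ≤ m * q.natDegree := Nat.mul_le_mul_right _ hm
    set na := n * p.natDegree
    set mb := m * q.natDegree
    omega
  · have hAconst : A.natDegree = 0 :=
      natDegree_eq_zero_of_derivative_eq_zero hderiv.1
    omega

lemma key {f p q : ℂ[X]} {n m : ℕ} (hn : 2 ≤ n) (hm : 2 ≤ m)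
    (hp : 1 ≤ p.natDegree) (hq : 1 ≤ q.natDegree) (hf : 1 ≤ f.natDegree)
    (heq : p ^ n - q ^ m = f) :
    n * p.natDegree ≤ 12 * f.natDegree ∧ m * q.natDegree ≤ 12 * f.natDegree := by
  have hf0 : f ≠ 0 := fun h => by simp [h] at hf
  have hp0 : p ≠ 0 := fun h => by simp [h] at hp
  have hq0 : q ≠ 0 := fun h => by simp [h] at hq
  rcases lt_trichotomy (n * p.natDegree) (m * q.natDegree) with h | h | h
  · -- deg f = m * deg q
    have h1 : (p ^ n - q ^ m).natDegree = (q ^ m).natDegree :=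
      natDegree_sub_eq_right_of_natDegree_lt (by rwa [natDegree_pow, natDegree_pow])
    rw [heq, natDegree_pow] at h1
    omega
  · by_cases hn3 : 3 ≤ n
    · have h1 := mason_case hn3 hm hp hq hf h heq
      omega
    · by_cases hm3 : 3 ≤ m
      · have hf' : 1 ≤ (-f).natDegree := by rwa [natDegree_neg]
        have h1 := mason_case hm3 hn hq hp hf' h.symm (by rw [← heq]; ring)
        rw [natDegree_neg] at h1
        omega
      · -- n = m = 2
        have hn2 : n = 2 := by omega
        have hm2 : m = 2 := by omega
        subst hn2; subst hm2
        have hfac : (p - q) * (p + q) = f := by rw [← heq]; ring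
        have hsub0 : p - q ≠ 0 := fun h0 => hf0 (by rw [← hfac, h0, zero_mul])
        have hadd0 : p + q ≠ 0 := fun h0 => hf0 (by rw [← hfac, h0, mul_zero])
        have hDsum : (p - q).natDegree + (p + q).natDegree = f.natDegree := by
          rw [← natDegree_mul hsub0 hadd0, hfac]
        have h2 : (p * 2).natDegree = p.natDegree := by
          rw [natDegree_mul hp0 (by norm_num : (2 : ℂ[X]) ≠ 0)]
          simp
        have h3 : (p * 2).natDegree ≤ max (p + q).natDegree (p - q).natDegree := by
          rw [show p * 2 = (p + q) + (p - q) by ring]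
          exact natDegree_add_le _ _
        have hple : p.natDegree ≤ f.natDegree := by
          rw [h2] at h3
          omega
        omega
  · -- deg f = n * deg p
    have h1 : (p ^ n - q ^ m).natDegree = (p ^ n).natDegree :=
      natDegree_sub_eq_left_of_natDegree_lt (by rwa [natDegree_pow, natDegree_pow])
    rw [heq, natDegree_pow] at h1
    omega

end PillaiAux

theorem pillai_polynomial_finiteness (f : ℂ[X]) (hf : 1 ≤ f.natDegree) :
    {v : ℕ × ℕ × ℕ × ℕ | ∃ p q : ℂ[X],
      2 ≤ v.1 ∧ 2 ≤ v.2.1 ∧ 1 ≤ p.natDegree ∧ 1 ≤ q.natDegree ∧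
      v.2.2.1 = p.natDegree ∧ v.2.2.2 = q.natDegree ∧
      p ^ v.1 - q ^ v.2.1 = f}.Finite := by
  set D := 12 * f.natDegree with hD
  apply Set.Finite.subset
    ((Set.finite_Iic D).prod ((Set.finite_Iic D).prod
      ((Set.finite_Iic D).prod (Set.finite_Iic D))))
  rintro ⟨n, m, a, b⟩ hv
  simp only [Set.mem_setOf_eq] at hv
  obtain ⟨p, q, hn, hm, hp, hq, ha, hb, heq⟩ := hv
  obtain ⟨h1, h2⟩ := PillaiAux.key hn hm hp hq hf heq
  have hna : n ≤ n * p.natDegree := Nat.le_mul_of_pos_right n (by omega)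
  have hap : p.natDegree ≤ n * p.natDegree := Nat.le_mul_of_pos_left _ (by omega)
  have hmb : m ≤ m * q.natDegree := Nat.le_mul_of_pos_right m (by omega)
  have hbq : q.natDegree ≤ m * q.natDegree := Nat.le_mul_of_pos_left _ (by omega)
  simp only [Set.mem_prod, Set.mem_Iic]
  refine ⟨?_, ?_, ?_, ?_⟩ <;> omega
end

section
/- Let f ∈ ℂ* be a non-zero constant. Then there is no vector (n, m, p, q) with integers n, m ≥ 2 and polynomials p, q ∈ ℂ[x] with deg p ≥ 1 and deg q ≥ 1 satisfying p^n − q^m = f. -/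
open Polynomial

theorem pillai_no_solution_constant (f : ℂ) (hf : f ≠ 0) :
    ¬ ∃ (n m : ℕ) (p q : ℂ[X]), 2 ≤ n ∧ 2 ≤ m ∧
      1 ≤ p.natDegree ∧ 1 ≤ q.natDegree ∧ p ^ n - q ^ m = C f := by
  rintro ⟨n, m, p, q, hn, hm, hp, hq, heq⟩
  -- p and q are coprime
  have hcop : IsCoprime p q := by
    refine ⟨C f⁻¹ * p ^ (n - 1), -(C f⁻¹) * q ^ (m - 1), ?_⟩
    have h1 : p ^ (n - 1) * p = p ^ n := by
      rw [← pow_succ]; congr 1; omega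
    have h2 : q ^ (m - 1) * q = q ^ m := by
      rw [← pow_succ]; congr 1; omega
    calc C f⁻¹ * p ^ (n - 1) * p + -(C f⁻¹) * q ^ (m - 1) * q
        = C f⁻¹ * (p ^ (n - 1) * p - q ^ (m - 1) * q) := by ring
      _ = C f⁻¹ * C f := by rw [h1, h2, heq]
      _ = 1 := by rw [← C_mul, inv_mul_cancel₀ hf, C_1]
  -- derivatives are equal
  have hder : C (n : ℂ) * p ^ (n - 1) * derivative p
      = C (m : ℂ) * q ^ (m - 1) * derivative q := by
    have := congrArg derivative heq
    rw [derivative_sub, derivative_C, sub_eq_zero, derivative_pow, derivative_pow] at this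
    exact this
  have hp' : derivative p ≠ 0 := fun h => by
    have := natDegree_eq_zero_of_derivative_eq_zero h; omega
  have hq' : derivative q ≠ 0 := fun h => by
    have := natDegree_eq_zero_of_derivative_eq_zero h; omega
  -- key divisibility lemma (used symmetrically)
  have key : ∀ (a b : ℂ[X]) (k l : ℕ), 2 ≤ k → 2 ≤ l → IsCoprime a b →
      derivative b ≠ 0 → 1 ≤ b.natDegree →
      C (k : ℂ) * a ^ (k - 1) * derivative a = C (l : ℂ) * b ^ (l - 1) * derivative b →
      (k - 1) * a.natDegree ≤ b.natDegree - 1 := by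
    intro a b k l hk hl hab hb' hb hEq
    have hl0 : (l : ℂ) ≠ 0 := Nat.cast_ne_zero.mpr (by omega)
    have hdvd : a ^ (k - 1) ∣ b ^ (l - 1) * derivative b := by
      have h1 : a ^ (k - 1) ∣ C (l : ℂ) * (b ^ (l - 1) * derivative b) := by
        rw [← mul_assoc, ← hEq]
        exact ⟨C (k : ℂ) * derivative a, by ring⟩
      rcases h1 with ⟨c, hc⟩
      refine ⟨C (l : ℂ)⁻¹ * c, ?_⟩
      have : C (l : ℂ)⁻¹ * (C (l : ℂ) * (b ^ (l - 1) * derivative b))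
          = C (l : ℂ)⁻¹ * (a ^ (k - 1) * c) := by rw [hc]
      rwa [← mul_assoc, ← C_mul, inv_mul_cancel₀ hl0, C_1, one_mul,
        ← mul_assoc, mul_comm _ (a ^ (k - 1)), mul_assoc] at this
    have hdvd' : a ^ (k - 1) ∣ derivative b :=
      (hab.pow).dvd_of_dvd_mul_left hdvd
    have := natDegree_le_of_dvd hdvd' hb'
    rw [natDegree_pow] at this
    have h2 := natDegree_derivative_le b
    omega
  have H1 := key p q n m hn hm hcop hq' hq hder
  have H2 := key q p m n hm hn hcop.symm hp' hp hder.symm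
  have e1 : p.natDegree ≤ (n - 1) * p.natDegree := Nat.le_mul_of_pos_left _ (by omega)
  have e2 : q.natDegree ≤ (m - 1) * q.natDegree := Nat.le_mul_of_pos_left _ (by omega)
  omega
end

section
/- Let f ∈ ℂ[x] with deg f ≥ 1 and suppose p^n − q^m = f for integers n, m ≥ 2 and polynomials p, q ∈ ℂ[x] with deg p ≥ 1 and deg q ≥ 1. Then n · deg p ≤ 1 + 2·deg f + deg p + deg q. -/
open Polynomial

/-- Over ℂ, the derivative of a polynomial of positive degree has degree one less,
and its leading coefficient is `deg * leadingCoeff`. -/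
lemma deriv_natDegree_leadingCoeff (g : ℂ[X]) (hg : 1 ≤ g.natDegree) :
    (derivative g).natDegree = g.natDegree - 1 ∧
      (derivative g).leadingCoeff = (g.natDegree : ℂ) * g.leadingCoeff := by
  have hg0 : g ≠ 0 := fun h => by simp [h] at hg
  have hc : (derivative g).coeff (g.natDegree - 1) = (g.natDegree : ℂ) * g.leadingCoeff := by
    rw [coeff_derivative]
    have h1 : g.natDegree - 1 + 1 = g.natDegree := by omega
    have h2 : ((g.natDegree - 1 : ℕ) : ℂ) + 1 = (g.natDegree : ℂ) := by
      rw [Nat.cast_sub hg]; ring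
    rw [h1, h2, leadingCoeff]
    ring
  have hlc : g.leadingCoeff ≠ 0 := leadingCoeff_ne_zero.mpr hg0
  have hne : (derivative g).coeff (g.natDegree - 1) ≠ 0 := by
    rw [hc]
    exact mul_ne_zero (Nat.cast_ne_zero.mpr (by omega)) hlc
  have hd : (derivative g).natDegree = g.natDegree - 1 :=
    le_antisymm (natDegree_derivative_le g) (le_natDegree_of_ne_zero hne)
  exact ⟨hd, by rw [leadingCoeff, hd, hc]⟩

theorem pillai_ndegp_bound (f p q : ℂ[X]) (n m : ℕ)
    (hf : 1 ≤ f.natDegree) (hn : 2 ≤ n) (hm : 2 ≤ m)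
    (hp : 1 ≤ p.natDegree) (hq : 1 ≤ q.natDegree)
    (heq : p ^ n - q ^ m = f) :
    n * p.natDegree ≤ 1 + 2 * f.natDegree + p.natDegree + q.natDegree := by
  have hp0 : p ≠ 0 := fun h => by simp [h] at hp
  have hq0 : q ≠ 0 := fun h => by simp [h] at hq
  have hf0 : f ≠ 0 := fun h => by simp [h] at hf
  set A : ℂ[X] := p ^ n with hA
  set B : ℂ[X] := q ^ m with hB
  have hA0 : A ≠ 0 := pow_ne_zero _ hp0
  have hB0 : B ≠ 0 := pow_ne_zero _ hq0
  have hdA : A.natDegree = n * p.natDegree := natDegree_pow p n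
  have hdB : B.natDegree = m * q.natDegree := natDegree_pow q m
  have hAB : A = B + f := by rw [← heq]; ring
  set W : ℂ[X] := A * derivative f - derivative A * f with hW
  have hW2 : W = B * derivative f - derivative B * f := by
    rw [hW, hAB, derivative_add]; ring
  by_cases hW0 : W = 0
  · -- Then A f' = A' f; comparing leading coefficients gives deg f = deg A.
    have hEq : A * derivative f = derivative A * f := sub_eq_zero.mp hW0
    have hdfA : f.natDegree = A.natDegree := by
      obtain ⟨hd1, hl1⟩ := deriv_natDegree_leadingCoeff f hf
      obtain ⟨hd2, hl2⟩ := deriv_natDegree_leadingCoeff A (by rw [hdA]; nlinarith)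
      have hlead : A.leadingCoeff * (derivative f).leadingCoeff =
          (derivative A).leadingCoeff * f.leadingCoeff := by
        rw [← leadingCoeff_mul, ← leadingCoeff_mul, hEq]
      rw [hl1, hl2] at hlead
      have hlcA : A.leadingCoeff ≠ 0 := leadingCoeff_ne_zero.mpr hA0
      have hlcf : f.leadingCoeff ≠ 0 := leadingCoeff_ne_zero.mpr hf0
      have hkey : (f.natDegree : ℂ) * (A.leadingCoeff * f.leadingCoeff) =
          (A.natDegree : ℂ) * (A.leadingCoeff * f.leadingCoeff) := by
        linear_combination hlead
      have : (f.natDegree : ℂ) = (A.natDegree : ℂ) :=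
        mul_right_cancel₀ (mul_ne_zero hlcA hlcf) hkey
      exact_mod_cast this
    omega
  · have hpW : p ^ (n - 1) ∣ W := by
      have h1 : p ^ (n - 1) ∣ A := pow_dvd_pow p (Nat.sub_le n 1)
      have h2 : p ^ (n - 1) ∣ derivative A :=
        ⟨C (n : ℂ) * derivative p, by rw [hA, derivative_pow]; ring⟩
      exact dvd_sub (h1.mul_right _) (h2.mul_right _)
    have hqW : q ^ (m - 1) ∣ W := by
      rw [hW2]
      have h1 : q ^ (m - 1) ∣ B := pow_dvd_pow q (Nat.sub_le m 1)
      have h2 : q ^ (m - 1) ∣ derivative B :=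
        ⟨C (m : ℂ) * derivative q, by rw [hB, derivative_pow]; ring⟩
      exact dvd_sub (h1.mul_right _) (h2.mul_right _)
    set P := p ^ (n - 1) with hP
    set Q := q ^ (m - 1) with hQ
    have hP0 : P ≠ 0 := pow_ne_zero _ hp0
    have hQ0 : Q ≠ 0 := pow_ne_zero _ hq0
    have hL : lcm P Q ∣ W := lcm_dvd hpW hqW
    have hL0 : lcm P Q ≠ 0 := fun h => by
      rcases lcm_eq_zero_iff P Q |>.mp h with h' | h'
      exacts [hP0 h', hQ0 h']
    have hG0 : gcd P Q ≠ 0 := gcd_ne_zero_of_left hP0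
    have hgf : gcd P Q ∣ f := by
      have h1 : gcd P Q ∣ A := (gcd_dvd_left P Q).trans (pow_dvd_pow p (Nat.sub_le n 1))
      have h2 : gcd P Q ∣ B := (gcd_dvd_right P Q).trans (pow_dvd_pow q (Nat.sub_le m 1))
      have hfe : f = A - B := by rw [hAB]; ring
      rw [hfe]; exact dvd_sub h1 h2
    have hGdeg : (gcd P Q).natDegree ≤ f.natDegree := natDegree_le_of_dvd hgf hf0
    have hLdeg : (lcm P Q).natDegree ≤ W.natDegree := natDegree_le_of_dvd hL hW0
    have hWdeg : W.natDegree ≤ m * q.natDegree + f.natDegree := by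
      rw [hW2]
      refine (natDegree_sub_le _ _).trans (max_le ?_ ?_)
      · refine natDegree_mul_le.trans ?_
        have := natDegree_derivative_le f
        omega
      · refine natDegree_mul_le.trans ?_
        have := natDegree_derivative_le B
        omega
    have hass : Associated (gcd P Q * lcm P Q) (P * Q) := gcd_mul_lcm P Q
    have hsum : (gcd P Q).natDegree + (lcm P Q).natDegree = P.natDegree + Q.natDegree := by
      have h1 := natDegree_le_of_dvd hass.dvd (mul_ne_zero hP0 hQ0)
      have h2 := natDegree_le_of_dvd hass.symm.dvd (mul_ne_zero hG0 hL0)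
      rw [natDegree_mul hG0 hL0, natDegree_mul hP0 hQ0] at h1 h2
      omega
    have hPd : P.natDegree = (n - 1) * p.natDegree := natDegree_pow p (n - 1)
    have hQd : Q.natDegree = (m - 1) * q.natDegree := natDegree_pow q (m - 1)
    have e1 : (n - 1) * p.natDegree + p.natDegree = n * p.natDegree := by
      have h : n - 1 + 1 = n := by omega
      calc (n - 1) * p.natDegree + p.natDegree = (n - 1 + 1) * p.natDegree := by ring
        _ = n * p.natDegree := by rw [h]
    have e2 : (m - 1) * q.natDegree + q.natDegree = m * q.natDegree := by
      have h : m - 1 + 1 = m := by omega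
      calc (m - 1) * q.natDegree + q.natDegree = (m - 1 + 1) * q.natDegree := by ring
        _ = m * q.natDegree := by rw [h]
    omega
end

section
/- Let f ∈ ℂ[x] with deg f ≥ 1 and suppose p^n − q^m = f for integers n, m ≥ 2 and polynomials p, q ∈ ℂ[x] with deg p ≥ 1 and deg q ≥ 1. Then m · deg q ≤ 1 + 2·deg f + deg p + deg q. -/
open Polynomial

theorem pillai_mdegq_bound (f p q : ℂ[X]) (n m : ℕ)
    (hf : 1 ≤ f.natDegree) (hn : 2 ≤ n) (hm : 2 ≤ m)
    (hp : 1 ≤ p.natDegree) (hq : 1 ≤ q.natDegree)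
    (heq : p ^ n - q ^ m = f) :
    m * q.natDegree ≤ 1 + 2 * f.natDegree + p.natDegree + q.natDegree := by
  obtain ⟨a, rfl⟩ : ∃ a, n = a + 2 := ⟨n - 2, by omega⟩
  obtain ⟨b, rfl⟩ : ∃ b, m = b + 2 := ⟨m - 2, by omega⟩
  have hfne : f ≠ 0 := fun h => by simp [h] at hf
  have hpne : p ≠ 0 := fun h => by simp [h] at hp
  have hqne : q ≠ 0 := fun h => by simp [h] at hq
  have hd := congrArg derivative heq
  rw [derivative_sub, derivative_pow, derivative_pow] at hd
  have e1 : a + 2 - 1 = a + 1 := by omega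
  have e2 : b + 2 - 1 = b + 1 := by omega
  rw [e1, e2] at hd
  -- key identity
  have key : q ^ (b + 1) *
      (C ((a + 2 : ℕ) : ℂ) * q * derivative p - C ((b + 2 : ℕ) : ℂ) * p * derivative q)
      = p * derivative f - C ((a + 2 : ℕ) : ℂ) * f * derivative p := by
    linear_combination p * hd - C ((a + 2 : ℕ) : ℂ) * derivative p * heq
  by_cases hw : p * derivative f - C ((a + 2 : ℕ) : ℂ) * f * derivative p = 0
  · -- degenerate case: deg f = n * deg p
    have hpf : p * derivative f = C ((a + 2 : ℕ) : ℂ) * (f * derivative p) := by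
      rw [← sub_eq_zero]; linear_combination hw
    have hdf : (derivative f).natDegree = f.natDegree - 1 := by
      have := degree_derivative_eq f (by omega)
      exact natDegree_eq_of_degree_eq_some this
    have hdp : (derivative p).natDegree = p.natDegree - 1 := by
      have := degree_derivative_eq p (by omega)
      exact natDegree_eq_of_degree_eq_some this
    have hlf : (derivative f).leadingCoeff = f.leadingCoeff * (f.natDegree : ℂ) := by
      rw [leadingCoeff, hdf, coeff_derivative]
      have : f.natDegree - 1 + 1 = f.natDegree := by omega
      rw [this]
      have h' : ((f.natDegree - 1 : ℕ) : ℂ) + 1 = (f.natDegree : ℂ) := by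
        rw [Nat.cast_sub hf]; ring
      rw [h']; rfl
    have hlp : (derivative p).leadingCoeff = p.leadingCoeff * (p.natDegree : ℂ) := by
      rw [leadingCoeff, hdp, coeff_derivative]
      have : p.natDegree - 1 + 1 = p.natDegree := by omega
      rw [this]
      have h' : ((p.natDegree - 1 : ℕ) : ℂ) + 1 = (p.natDegree : ℂ) := by
        rw [Nat.cast_sub hp]; ring
      rw [h']; rfl
    have hlc := congrArg leadingCoeff hpf
    rw [leadingCoeff_mul, leadingCoeff_mul, leadingCoeff_mul, leadingCoeff_C, hlf, hlp] at hlc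
    have hlfne : f.leadingCoeff ≠ 0 := leadingCoeff_ne_zero.mpr hfne
    have hlpne : p.leadingCoeff ≠ 0 := leadingCoeff_ne_zero.mpr hpne
    have hcast : (f.natDegree : ℂ) = ((a + 2 : ℕ) : ℂ) * (p.natDegree : ℂ) := by
      have h2 : ((f.natDegree : ℂ) - ((a + 2 : ℕ) : ℂ) * (p.natDegree : ℂ)) *
          (p.leadingCoeff * f.leadingCoeff) = 0 := by linear_combination hlc
      rcases mul_eq_zero.mp h2 with h | h
      · exact sub_eq_zero.mp h
      · exact absurd h (mul_ne_zero hlpne hlfne)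
    have hdeg : f.natDegree = (a + 2) * p.natDegree := by exact_mod_cast hcast
    have hqm : q ^ (b + 2) = p ^ (a + 2) - f := by linear_combination -heq
    have h3 : (b + 2) * q.natDegree ≤ f.natDegree := by
      have := natDegree_sub_le (p ^ (a + 2)) f
      rw [← hqm, natDegree_pow, natDegree_pow] at this
      omega
    omega
  · -- main case: q^(b+1) divides the wronskian-type expression
    have hdvd : q ^ (b + 1) ∣ p * derivative f - C ((a + 2 : ℕ) : ℂ) * f * derivative p :=
      ⟨_, key.symm⟩
    have h1 : (q ^ (b + 1)).natDegree ≤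
        (p * derivative f - C ((a + 2 : ℕ) : ℂ) * f * derivative p).natDegree :=
      natDegree_le_of_dvd hdvd hw
    rw [natDegree_pow] at h1
    have h2 : (p * derivative f - C ((a + 2 : ℕ) : ℂ) * f * derivative p).natDegree ≤
        p.natDegree + f.natDegree := by
      refine (natDegree_sub_le _ _).trans (max_le ?_ ?_)
      · exact (natDegree_mul_le).trans (by
          have := natDegree_derivative_le f
          omega)
      · refine (natDegree_mul_le).trans ?_
        have h3 := natDegree_mul_le (p := C ((a + 2 : ℕ) : ℂ)) (q := f)
        have h4 := natDegree_derivative_le p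
        simp only [natDegree_C] at h3
        omega
    have h5 : (b + 1) * q.natDegree ≤ p.natDegree + f.natDegree := le_trans h1 h2
    have h6 : (b + 2) * q.natDegree = (b + 1) * q.natDegree + q.natDegree := by ring
    omega
end

section
/- Let f ∈ ℂ[x] with deg f ≥ 1 and suppose p^n − q^m = f for integers n ≥ 3 and m ≥ 2 and polynomials p, q ∈ ℂ[x] with deg p ≥ deg q ≥ 1. Then deg p ≤ 1 + 2·deg f and n ≤ 3 + 2·deg f. -/
open Polynomial

open UniqueFactorizationMonoid in
lemma radical_dvd_radical_of_dvd' {a b : ℂ[X]} (ha : a ≠ 0) (hb : b ≠ 0) (h : a ∣ b) :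
    radical a ∣ radical b := by
  classical
  have hle : normalizedFactors a ≤ normalizedFactors b :=
    (dvd_iff_normalizedFactors_le_normalizedFactors ha hb).mp h
  have hsub : primeFactors a ⊆ primeFactors b := by
    intro x hx
    simp only [primeFactors, Multiset.mem_toFinset] at hx ⊢
    exact Multiset.subset_of_le hle hx
  exact Finset.prod_dvd_prod_of_subset _ _ id hsub

theorem pillai_case_n_ge_three (f p q : ℂ[X]) (n m : ℕ)
    (hf : 1 ≤ f.natDegree) (hn : 3 ≤ n) (hm : 2 ≤ m)
    (hq : 1 ≤ q.natDegree) (hpq : q.natDegree ≤ p.natDegree)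
    (heq : p ^ n - q ^ m = f) :
    p.natDegree ≤ 1 + 2 * f.natDegree ∧ n ≤ 3 + 2 * f.natDegree := by
  classical
  have hp0 : p ≠ 0 := by rintro rfl; simp at hpq; omega
  have hq0 : q ≠ 0 := by rintro rfl; simp at hq
  have hf0 : f ≠ 0 := by rintro rfl; simp at hf
  have hpn0 : p ^ n ≠ 0 := pow_ne_zero _ hp0
  have hqm0 : q ^ m ≠ 0 := pow_ne_zero _ hq0
  set d : ℂ[X] := GCDMonoid.gcd (p ^ n) (q ^ m) with hd
  have hd0 : d ≠ 0 := gcd_ne_zero_of_right hqm0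
  have hdvd1 : d ∣ p ^ n := gcd_dvd_left _ _
  have hdvd2 : d ∣ q ^ m := gcd_dvd_right _ _
  have hdvdf : d ∣ f := heq ▸ dvd_sub hdvd1 hdvd2
  set u : ℂ[X] := p ^ n / d with hu
  set v : ℂ[X] := q ^ m / d with hv
  set w : ℂ[X] := f / d with hw
  have hud : u * d = p ^ n := by
    rw [hu, mul_comm]; exact (EuclideanDomain.mul_div_cancel' hd0 hdvd1).symm ▸ rfl
  have hvd : v * d = q ^ m := by
    rw [hv, mul_comm]; exact (EuclideanDomain.mul_div_cancel' hd0 hdvd2).symm ▸ rfl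
  have hwd : w * d = f := by
    rw [hw, mul_comm]; exact (EuclideanDomain.mul_div_cancel' hd0 hdvdf).symm ▸ rfl
  have hu0 : u ≠ 0 := by rintro h; rw [h, zero_mul] at hud; exact hpn0 hud.symm
  have hv0 : v ≠ 0 := by rintro h; rw [h, zero_mul] at hvd; exact hqm0 hvd.symm
  have hw0 : w ≠ 0 := by rintro h; rw [h, zero_mul] at hwd; exact hf0 hwd.symm
  have hsum : u = v + w := by
    have : (u - v - w) * d = 0 := by
      rw [sub_mul, sub_mul, hud, hvd, hwd, ← heq]; ring
    have := (mul_eq_zero.mp this).resolve_right hd0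
    have : u - v - w = 0 := this
    linear_combination this
  have huv : IsCoprime u v := isCoprime_div_gcd_div_gcd hqm0
  have huw : IsCoprime u w := by
    have := (huv.neg_right).add_mul_left_right 1
    have h2 : -v + u * 1 = w := by rw [hsum]; ring
    rwa [h2] at this
  have hvw : IsCoprime v w := by
    have := (huv.symm).add_mul_left_right (-1)
    have h2 : u + v * (-1) = w := by rw [hsum]; ring
    rwa [h2] at this
  -- degree bookkeeping
  have hdegu : u.natDegree + d.natDegree = n * p.natDegree := by
    have := congrArg natDegree hud
    rwa [natDegree_mul hu0 hd0, natDegree_pow] at this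
  have hdegw : w.natDegree + d.natDegree = f.natDegree := by
    have := congrArg natDegree hwd
    rwa [natDegree_mul hw0 hd0] at this
  obtain ⟨k, rfl⟩ : ∃ k, n = k + 3 := ⟨n - 3, by omega⟩
  -- Mason–Stothers
  have habc := Polynomial.abc hu0 (neg_ne_zero.mpr hv0) (neg_ne_zero.mpr hw0)
    huv.neg_right
    (by rw [hsum]; ring)
  rcases habc with ⟨h1, -, -⟩ | ⟨h1, h2, h3⟩
  · -- main case
    have harg : u * -v * -w = u * v * w := by ring
    rw [harg] at h1
    have hr1 : (UniqueFactorizationMonoid.radical (u * v * w)) =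
        UniqueFactorizationMonoid.radical u * UniqueFactorizationMonoid.radical v *
          UniqueFactorizationMonoid.radical w := by
      rw [UniqueFactorizationMonoid.radical_mul (huw.mul_left hvw).isRelPrime,
        UniqueFactorizationMonoid.radical_mul huv.isRelPrime]
    rw [hr1] at h1
    have hru : (UniqueFactorizationMonoid.radical u).natDegree ≤ p.natDegree := by
      have hdvd : UniqueFactorizationMonoid.radical u ∣ UniqueFactorizationMonoid.radical p := by
        have h4 : u ∣ p ^ (k + 3) := Dvd.intro d hud
        have := radical_dvd_radical_of_dvd' hu0 hpn0 h4
        rwa [UniqueFactorizationMonoid.radical_pow p (by omega : k + 3 ≠ 0)] at this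
      exact le_trans (natDegree_le_of_dvd hdvd ((UniqueFactorizationMonoid.radical_ne_zero (a := p))))
        (natDegree_le_of_dvd ((UniqueFactorizationMonoid.radical_dvd_self (a := p))) hp0)
    have hrv : (UniqueFactorizationMonoid.radical v).natDegree ≤ q.natDegree := by
      have hdvd : UniqueFactorizationMonoid.radical v ∣ UniqueFactorizationMonoid.radical q := by
        have h4 : v ∣ q ^ m := Dvd.intro d hvd
        have := radical_dvd_radical_of_dvd' hv0 hqm0 h4
        rwa [UniqueFactorizationMonoid.radical_pow q (by omega : m ≠ 0)] at this
      exact le_trans (natDegree_le_of_dvd hdvd ((UniqueFactorizationMonoid.radical_ne_zero (a := q))))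
        (natDegree_le_of_dvd ((UniqueFactorizationMonoid.radical_dvd_self (a := q))) hq0)
    have hrw : (UniqueFactorizationMonoid.radical w).natDegree ≤ w.natDegree :=
      natDegree_le_of_dvd ((UniqueFactorizationMonoid.radical_dvd_self (a := w))) hw0
    have hdeg : (UniqueFactorizationMonoid.radical u * UniqueFactorizationMonoid.radical v *
        UniqueFactorizationMonoid.radical w).natDegree ≤
        p.natDegree + q.natDegree + w.natDegree := by
      rw [natDegree_mul (mul_ne_zero ((UniqueFactorizationMonoid.radical_ne_zero (a := u)))
          ((UniqueFactorizationMonoid.radical_ne_zero (a := v))))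
          ((UniqueFactorizationMonoid.radical_ne_zero (a := w))),
        natDegree_mul ((UniqueFactorizationMonoid.radical_ne_zero (a := u)))
          ((UniqueFactorizationMonoid.radical_ne_zero (a := v)))]
      omega
    -- n * deg p + 1 ≤ deg p + deg q + deg f
    have key : (k + 3) * p.natDegree + 1 ≤ p.natDegree + q.natDegree + f.natDegree := by
      have := le_trans h1 hdeg
      omega
    have hkp : k ≤ k * p.natDegree := Nat.le_mul_of_pos_right k (by omega)
    have hexp : (k + 3) * p.natDegree = k * p.natDegree + 3 * p.natDegree := by ring
    constructor <;> omega
  · -- degenerate case: u, v, w all constant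
    have hu' : u.natDegree = 0 := natDegree_eq_zero_of_derivative_eq_zero h1
    have hw' : w.natDegree = 0 := by
      have : derivative w = 0 := by
        have := h3; rwa [derivative_neg, neg_eq_zero] at this
      exact natDegree_eq_zero_of_derivative_eq_zero this
    have hkey : (k + 3) * p.natDegree = f.natDegree := by omega
    have h1' : p.natDegree ≤ (k + 3) * p.natDegree := Nat.le_mul_of_pos_left _ (by omega)
    have h2' : (k + 3) ≤ (k + 3) * p.natDegree := Nat.le_mul_of_pos_right _ (by omega)
    constructor <;> omega
end

section
/- Let f ∈ ℂ[x] with deg f ≥ 1 and suppose p^n − q^m = f for integers n ≥ 3 and m ≥ 2 and polynomials p, q ∈ ℂ[x] with deg p ≥ deg q ≥ 1. Then m · deg q ≤ 3 + 8·deg f + 4·(deg f)². -/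
open Polynomial UniqueFactorizationMonoid

lemma my_radical_dvd_radical_of_dvd {M : Type*} [CommMonoidWithZero M] [IsCancelMulZero M]
    [NormalizationMonoid M] [UniqueFactorizationMonoid M] {a b : M}
    (ha : a ≠ 0) (hb : b ≠ 0) (h : a ∣ b) : radical a ∣ radical b := by
  classical
  apply Finset.prod_dvd_prod_of_subset
  intro x hx
  rw [primeFactors, Multiset.mem_toFinset] at hx ⊢
  exact Multiset.mem_of_le
    ((dvd_iff_normalizedFactors_le_normalizedFactors ha hb).mp h) hx

theorem pillai_case_n_ge_three_mdegq (f p q : ℂ[X]) (n m : ℕ)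
    (hf : 1 ≤ f.natDegree) (hn : 3 ≤ n) (hm : 2 ≤ m)
    (hq : 1 ≤ q.natDegree) (hpq : q.natDegree ≤ p.natDegree)
    (heq : p ^ n - q ^ m = f) :
    m * q.natDegree ≤ 3 + 8 * f.natDegree + 4 * f.natDegree ^ 2 := by
  classical
  have hf0 : f ≠ 0 := by rintro rfl; simp at hf
  have hq0 : q ≠ 0 := by rintro rfl; simp at hq
  have hp0 : p ≠ 0 := by rintro rfl; rw [natDegree_zero] at hpq; omega
  have hF2 : f.natDegree ≤ f.natDegree * f.natDegree :=
    Nat.le_mul_of_pos_left _ (by omega)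
  have hsq : f.natDegree ^ 2 = f.natDegree * f.natDegree := sq f.natDegree
  have hnP : (p ^ n).natDegree = n * p.natDegree := natDegree_pow p n
  have hmQ : (q ^ m).natDegree = m * q.natDegree := natDegree_pow q m
  rcases lt_trichotomy (n * p.natDegree) (m * q.natDegree) with h | h | h
  · -- deg f = m * deg q
    have : f.natDegree = m * q.natDegree := by
      rw [← heq, natDegree_sub_eq_right_of_natDegree_lt (by omega), hmQ]
    rw [hsq]; omega
  · -- cancellation case: use Mason-Stothers
    set a := p ^ n with ha_def
    set b := q ^ m with hb_def
    have ha0 : a ≠ 0 := pow_ne_zero n hp0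
    have hb0 : b ≠ 0 := pow_ne_zero m hq0
    set g := GCDMonoid.gcd a b with hg_def
    have hg0 : g ≠ 0 := gcd_ne_zero_of_left ha0
    set a₁ := a / g with ha₁_def
    set b₁ := b / g with hb₁_def
    have ha : a = g * a₁ :=
      (EuclideanDomain.mul_div_cancel' hg0 (gcd_dvd_left a b)).symm
    have hb : b = g * b₁ :=
      (EuclideanDomain.mul_div_cancel' hg0 (gcd_dvd_right a b)).symm
    have hcop : IsCoprime a₁ b₁ := isCoprime_div_gcd_div_gcd hb0
    have ha₁0 : a₁ ≠ 0 := by rintro h'; rw [h', mul_zero] at ha; exact ha0 ha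
    have hb₁0 : b₁ ≠ 0 := by rintro h'; rw [h', mul_zero] at hb; exact hb0 hb
    set f₁ := a₁ - b₁ with hf₁_def
    have hff : f = g * f₁ := by rw [← heq, ha, hb, hf₁_def]; ring
    have hf₁0 : f₁ ≠ 0 := by rintro h'; rw [h', mul_zero] at hff; exact hf0 hff
    have hgF : g.natDegree ≤ f.natDegree :=
      natDegree_le_of_dvd ⟨f₁, hff⟩ hf0
    have hDa : a.natDegree = g.natDegree + a₁.natDegree := by
      rw [ha, natDegree_mul hg0 ha₁0]
    -- coprimality of the other pairs
    have hbf : IsCoprime b₁ f₁ := by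
      have := hcop.symm.add_mul_left_right (-1)
      have e : a₁ + b₁ * (-1) = f₁ := by rw [hf₁_def]; ring
      rwa [e] at this
    have hfa : IsCoprime f₁ a₁ := by
      have := (hcop.add_mul_left_right (-1)).neg_right
      have e : -(b₁ + a₁ * (-1)) = f₁ := by rw [hf₁_def]; ring
      rw [e] at this
      exact this.symm
    have hsum : a₁ + (-b₁) + (-f₁) = 0 := by rw [hf₁_def]; ring
    have habc := Polynomial.abc ha₁0 (neg_ne_zero.mpr hb₁0) (neg_ne_zero.mpr hf₁0)
      hcop.neg_right hsum
    have hprod : a₁ * -b₁ * -f₁ = a₁ * b₁ * f₁ := by ring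
    rw [hprod] at habc
    rcases habc with ⟨h1, -, -⟩ | ⟨h1, h2, h3⟩
    · -- radical bound
      have hdvd : a₁ * b₁ * f₁ ∣ (p * q * f) ^ (n + m) := by
        have d1 : a₁ ∣ p ^ (n + m) :=
          dvd_trans (Dvd.intro_left g ha.symm)
            (dvd_trans dvd_rfl (pow_dvd_pow p (by omega)))
        have d2 : b₁ ∣ q ^ (n + m) :=
          dvd_trans (Dvd.intro_left g hb.symm) (pow_dvd_pow q (by omega))
        have d3 : f₁ ∣ f ^ (n + m) :=
          dvd_trans (Dvd.intro_left g hff.symm) (dvd_pow_self f (by omega))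
        calc a₁ * b₁ * f₁ ∣ p ^ (n + m) * q ^ (n + m) * f ^ (n + m) :=
              mul_dvd_mul (mul_dvd_mul d1 d2) d3
          _ = (p * q * f) ^ (n + m) := by rw [mul_pow, mul_pow]
      have hpqf0 : p * q * f ≠ 0 := mul_ne_zero (mul_ne_zero hp0 hq0) hf0
      have habf0 : a₁ * b₁ * f₁ ≠ 0 := mul_ne_zero (mul_ne_zero ha₁0 hb₁0) hf₁0
      have hr : radical (a₁ * b₁ * f₁) ∣ p * q * f := by
        calc radical (a₁ * b₁ * f₁) ∣ radical ((p * q * f) ^ (n + m)) :=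
              my_radical_dvd_radical_of_dvd habf0 (pow_ne_zero _ hpqf0) hdvd
          _ = radical (p * q * f) := radical_pow _ (by omega)
          _ ∣ p * q * f := radical_dvd_self
      have hrad : (radical (a₁ * b₁ * f₁)).natDegree ≤
          p.natDegree + q.natDegree + f.natDegree := by
        have := natDegree_le_of_dvd hr hpqf0
        rwa [natDegree_mul (mul_ne_zero hp0 hq0) hf0, natDegree_mul hp0 hq0] at this
      -- combine
      have key : m * q.natDegree + 1 ≤
          p.natDegree + q.natDegree + 2 * f.natDegree := by
        have hD : n * p.natDegree = g.natDegree + a₁.natDegree := by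
          rw [← hnP]; exact hDa
        omega
      have h3P : 3 * p.natDegree ≤ n * p.natDegree :=
        Nat.mul_le_mul_right _ hn
      have h2Q : 2 * q.natDegree ≤ m * q.natDegree :=
        Nat.mul_le_mul_right _ hm
      rw [hsq]
      omega
    · -- all derivatives vanish : a₁ constant
      have : a₁.natDegree = 0 := natDegree_eq_zero_of_derivative_eq_zero h1
      have : n * p.natDegree ≤ f.natDegree := by rw [← hnP]; omega
      rw [hsq]; omega
  · -- deg f = n * deg p > m * deg q
    have : f.natDegree = n * p.natDegree := by
      rw [← heq, natDegree_sub_eq_left_of_natDegree_lt (by omega), hnP]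
    rw [hsq]; omega
end

section
/- Let f ∈ ℂ[x] with deg f ≥ 1 and suppose p² − q^m = f for an integer m ≥ 3 and polynomials p, q ∈ ℂ[x] with deg p ≥ deg q ≥ 1. Then (m − 2) · deg q ≤ 2 + 4·deg f; in particular deg q ≤ 2 + 4·deg f and m ≤ 4 + 4·deg f. -/
open Polynomial

private lemma lc_derivative (p : ℂ[X]) (hp : 1 ≤ p.natDegree) :
    (derivative p).leadingCoeff = (p.natDegree : ℂ) * p.leadingCoeff := by
  have hd : (derivative p).natDegree = p.natDegree - 1 :=
    natDegree_eq_of_degree_eq_some (degree_derivative_eq p (by omega))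
  rw [leadingCoeff, hd, coeff_derivative, leadingCoeff, Nat.sub_add_cancel hp]
  have : ((p.natDegree - 1 : ℕ) : ℂ) + 1 = (p.natDegree : ℂ) := by
    push_cast [Nat.cast_sub hp]
    ring
  rw [this, mul_comm]

theorem pillai_case_n_two_m_ge_three (f p q : ℂ[X]) (m : ℕ)
    (hf : 1 ≤ f.natDegree) (hm : 3 ≤ m)
    (hq : 1 ≤ q.natDegree) (hpq : q.natDegree ≤ p.natDegree)
    (heq : p ^ 2 - q ^ m = f) :
    (m - 2) * q.natDegree ≤ 2 + 4 * f.natDegree ∧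
    q.natDegree ≤ 2 + 4 * f.natDegree ∧ m ≤ 4 + 4 * f.natDegree := by
  have hp1 : 1 ≤ p.natDegree := le_trans hq hpq
  have hf0 : f ≠ 0 := fun h => by simp [h] at hf
  have hp0 : p ≠ 0 := fun h => by simp [h] at hp1
  have hq0 : q ≠ 0 := fun h => by simp [h] at hq
  have hlcp : p.leadingCoeff ≠ 0 := leadingCoeff_ne_zero.mpr hp0
  have hlcq : q.leadingCoeff ≠ 0 := leadingCoeff_ne_zero.mpr hq0
  have hlcf : f.leadingCoeff ≠ 0 := leadingCoeff_ne_zero.mpr hf0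
  obtain ⟨k, rfl⟩ : ∃ k, m = k + 1 := ⟨m - 1, by omega⟩
  -- key identity
  have hfd : derivative f = C 2 * p * derivative p - C ((k:ℂ) + 1) * q ^ k * derivative q := by
    rw [← heq, derivative_sub, derivative_sq, derivative_pow_succ]
  have key : C 2 * derivative p * f - p * derivative f
      = q ^ k * (C ((k:ℂ)+1) * p * derivative q - C 2 * derivative p * q) := by
    rw [hfd, ← heq]
    ring
  -- main bound : (m-2) * deg q ≤ 2 * deg f  (call b := deg q etc.)
  have main : ((k+1) - 2) * q.natDegree ≤ 2 + 4 * f.natDegree := by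
    have hsm : (k+1) * q.natDegree - 2 * q.natDegree = ((k+1)-2) * q.natDegree := by
      rw [Nat.sub_mul]
    by_cases hD : C 2 * derivative p * f - p * derivative f = 0
    · -- degenerate case: both factors give degree equalities
      have h1 : C 2 * derivative p * f = p * derivative f := by
        rwa [sub_eq_zero] at hD
      have h2 : C ((k:ℂ)+1) * p * derivative q = C 2 * derivative p * q := by
        rw [hD] at key
        have := (mul_eq_zero.mp key.symm).resolve_left (pow_ne_zero k hq0)
        rwa [sub_eq_zero] at this
      -- derivative f ≠ 0 info not needed; compare leading coefficients
      have e1 : (2 : ℂ) * (p.natDegree * p.leadingCoeff) * f.leadingCoeff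
          = p.leadingCoeff * (f.natDegree * f.leadingCoeff) := by
        have := congrArg leadingCoeff h1
        simp only [leadingCoeff_mul, leadingCoeff_C, lc_derivative p hp1,
          lc_derivative f hf] at this
        exact this
      have e2 : ((k:ℂ)+1) * p.leadingCoeff * (q.natDegree * q.leadingCoeff)
          = 2 * (p.natDegree * p.leadingCoeff) * q.leadingCoeff := by
        have := congrArg leadingCoeff h2
        simp only [leadingCoeff_mul, leadingCoeff_C, lc_derivative p hp1,
          lc_derivative q hq] at this
        exact this
      have d1 : 2 * p.natDegree = f.natDegree := by
        have : (2 * p.natDegree : ℂ) * (p.leadingCoeff * f.leadingCoeff)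
            = (f.natDegree : ℂ) * (p.leadingCoeff * f.leadingCoeff) := by
          linear_combination e1
        have := mul_right_cancel₀ (mul_ne_zero hlcp hlcf) this
        exact_mod_cast this
      have d2 : (k+1) * q.natDegree = 2 * p.natDegree := by
        have : ((k+1) * q.natDegree : ℂ) * (p.leadingCoeff * q.leadingCoeff)
            = (2 * p.natDegree : ℂ) * (p.leadingCoeff * q.leadingCoeff) := by
          linear_combination e2
        have := mul_right_cancel₀ (mul_ne_zero hlcp hlcq) this
        exact_mod_cast this
      omega
    · -- nondegenerate case: q^k divides a nonzero polynomial of controlled degree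
      have hdvd : q ^ k ∣ C 2 * derivative p * f - p * derivative f := ⟨_, key⟩
      have hdeg : k * q.natDegree ≤ p.natDegree + f.natDegree := by
        calc k * q.natDegree = (q ^ k).natDegree := (natDegree_pow q k).symm
          _ ≤ (C 2 * derivative p * f - p * derivative f).natDegree :=
              natDegree_le_of_dvd hdvd hD
          _ ≤ max (C 2 * derivative p * f).natDegree (p * derivative f).natDegree :=
              natDegree_sub_le _ _
          _ ≤ p.natDegree + f.natDegree := by
              apply max_le
              · calc (C 2 * derivative p * f).natDegree
                    ≤ (C 2 * derivative p).natDegree + f.natDegree := natDegree_mul_le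
                  _ ≤ ((C 2 : ℂ[X]).natDegree + (derivative p).natDegree) + f.natDegree := by
                      exact Nat.add_le_add_right natDegree_mul_le _
                  _ ≤ p.natDegree + f.natDegree := by
                      have := natDegree_derivative_le p
                      simp only [natDegree_C]
                      omega
              · calc (p * derivative f).natDegree
                    ≤ p.natDegree + (derivative f).natDegree := natDegree_mul_le
                  _ ≤ p.natDegree + f.natDegree := by
                      have := natDegree_derivative_le f
                      omega
      have hpdeg : 2 * p.natDegree ≤ max f.natDegree ((k+1) * q.natDegree) := by
        have hps : p ^ 2 = f + q ^ (k+1) := by rw [← heq]; ring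
        calc 2 * p.natDegree = (p ^ 2).natDegree := by
              rw [natDegree_pow]
          _ ≤ max f.natDegree (q ^ (k+1)).natDegree := hps ▸ natDegree_add_le _ _
          _ = max f.natDegree ((k+1) * q.natDegree) := by rw [natDegree_pow]
      rcases le_max_iff.mp hpdeg with h | h
      · -- 2 deg p ≤ deg f
        have : (k+1) * q.natDegree ≤ q.natDegree + p.natDegree + f.natDegree := by
          calc (k+1) * q.natDegree = k * q.natDegree + q.natDegree := by ring
            _ ≤ p.natDegree + f.natDegree + q.natDegree := by omega
            _ = q.natDegree + p.natDegree + f.natDegree := by ring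
        omega
      · -- 2 deg p ≤ (k+1) deg q
        have h2 : 2 * (k * q.natDegree) ≤ 2 * p.natDegree + 2 * f.natDegree := by omega
        have h3 : 2 * (k * q.natDegree) = 2 * k * q.natDegree := by ring
        have h4 : 2 * k * q.natDegree ≤ (k+1) * q.natDegree + 2 * f.natDegree := by omega
        have h5 : 2 * k * q.natDegree = (k+1) * q.natDegree + (k-1) * q.natDegree := by
          have : 2 * k = (k+1) + (k-1) := by omega
          rw [this, Nat.add_mul]
        have h6 : (k-1) * q.natDegree ≤ 2 * f.natDegree := by omega
        have h7 : ((k+1)-2) * q.natDegree = (k-1) * q.natDegree := by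
          rw [show (k+1)-2 = k-1 from by omega]
        omega
  refine ⟨main, ?_, ?_⟩
  · have : q.natDegree ≤ ((k+1)-2) * q.natDegree :=
      Nat.le_mul_of_pos_left _ (by omega)
    omega
  · have : (k+1) - 2 ≤ ((k+1)-2) * q.natDegree :=
      Nat.le_mul_of_pos_right _ (by omega)
    omega
end

section
/- Let T ⊆ ℂ be a finite set and let u₁, …, u_k be non-zero elements of the rational function field ℂ(x) such that for each i, every zero and every pole of u_i in ℂ lies in T (i.e. each u_i is a constant times a product of integer powers of factors (x − α) with α ∈ T). Suppose 1 + u₁ + ⋯ + u_k = 0 and no proper subsum of the left-hand side vanishes. Then max_{i=1,…,k} H(u_i) ≤ (k choose 2) · (|T| + 1). -/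
/-- The (projective) height of a rational function over ℂ:
for `f = p/q` in lowest terms, `H(f) = max (deg p) (deg q)`. -/
noncomputable def ratFuncHeight (f : RatFunc ℂ) : ℕ :=
  max f.num.natDegree f.denom.natDegree


open Polynomial Finset

namespace BM

lemma sum_fin_id (k : ℕ) : ∑ j : Fin k, (j : ℕ) = k.choose 2 := by
  rw [Fin.sum_univ_eq_sum_range (fun i => i) k, Nat.choose_two_right]
  have := Finset.sum_range_id_mul_two k
  omega

/-- distinct naturals: a finset of naturals of card n has sum ≥ n choose 2 -/
lemma choose_two_le_sum_finset (S : Finset ℕ) : S.card.choose 2 ≤ ∑ x ∈ S, x := by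
  induction S using Finset.strongInduction with
  | _ S ih =>
    rcases S.eq_empty_or_nonempty with rfl | hne
    · simp
    · have hmax := S.max'_mem hne
      have hsub : S ⊆ Finset.range (S.max' hne + 1) := by
        intro x hx; simp [Nat.lt_succ_iff, Finset.le_max' S x hx]
      have hcard : S.card ≤ S.max' hne + 1 := by
        simpa using Finset.card_le_card hsub
      have h1 := ih (S.erase (S.max' hne)) (Finset.erase_ssubset hmax)
      have h2 : ∑ x ∈ S, x = ∑ x ∈ S.erase (S.max' hne), x + S.max' hne :=
        (Finset.sum_erase_add S _ hmax).symm
      have h3 : (S.erase (S.max' hne)).card = S.card - 1 := Finset.card_erase_of_mem hmax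
      rw [h3] at h1
      have hc : S.card.choose 2 ≤ (S.card - 1).choose 2 + (S.card - 1) := by
        rcases hS : S.card with _ | n
        · simp
        · have : (n+1).choose 2 = n.choose 1 + n.choose 2 := Nat.choose_succ_succ n 1
          simp only [Nat.choose_one_right] at this
          simp [this]
          omega
      have hmaxge : S.card - 1 ≤ S.max' hne := by omega
      omega

lemma choose_two_le_sum {k : ℕ} (d : Fin k → ℕ) (hd : Function.Injective d) :
    k.choose 2 ≤ ∑ i, d i := by
  have h1 : (Finset.univ.image d).card = k := by
    rw [Finset.card_image_of_injective _ hd, Finset.card_univ, Fintype.card_fin]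
  have h2 : ∑ x ∈ Finset.univ.image d, x = ∑ i, d i :=
    Finset.sum_image (fun x _ y _ h => hd h)
  calc k.choose 2 = (Finset.univ.image d).card.choose 2 := by rw [h1]
    _ ≤ _ := choose_two_le_sum_finset _
    _ = _ := h2

/-- coefficient of product at exact sum of degree bounds -/
lemma coeff_mul_top {p q : ℂ[X]} {a b : ℕ} (hp : p.natDegree ≤ a) (hq : q.natDegree ≤ b) :
    (p * q).coeff (a + b) = p.coeff a * q.coeff b := by
  rcases lt_or_eq_of_le hp with h | h
  · have h1 : (p * q).natDegree < a + b := by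
      calc (p*q).natDegree ≤ p.natDegree + q.natDegree := natDegree_mul_le
        _ < a + b := by omega
    rw [coeff_eq_zero_of_natDegree_lt h1, coeff_eq_zero_of_natDegree_lt h, zero_mul]
  · rcases lt_or_eq_of_le hq with h' | h'
    · have h1 : (p*q).natDegree < a + b := by
        calc (p*q).natDegree ≤ p.natDegree + q.natDegree := natDegree_mul_le
          _ < a + b := by omega
      rw [coeff_eq_zero_of_natDegree_lt h1, coeff_eq_zero_of_natDegree_lt h', mul_zero]
    · subst h h'
      exact coeff_mul_degree_add_degree p q

lemma coeff_prod_top {k : ℕ} (g : Fin k → ℂ[X]) (e : Fin k → ℕ)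
    (h : ∀ j, (g j).natDegree ≤ e j) :
    (∏ j, g j).coeff (∑ j, e j) = ∏ j, (g j).coeff (e j) := by
  classical
  induction k with
  | zero => simp
  | succ n ih =>
    rw [Fin.prod_univ_succ, Fin.sum_univ_succ, Fin.prod_univ_succ,
      coeff_mul_top (h 0) (by
        calc (∏ j : Fin n, g j.succ).natDegree ≤ ∑ j : Fin n, (g j.succ).natDegree :=
          natDegree_prod_le _ _
        _ ≤ ∑ j : Fin n, e j.succ := Finset.sum_le_sum fun j _ => h j.succ),
      ih _ _ (fun j => h j.succ)]


lemma rootMult_zero_of_not_root {p : ℂ[X]} {x : ℂ} (hx : ¬ p.IsRoot x) :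
    rootMultiplicity x p = 0 := by
  by_cases hp : p = 0
  · subst hp; exact absurd (IsRoot.def.mpr (by simp)) hx
  · exact rootMultiplicity_eq_zero_iff.mpr (fun h => absurd h hx)

/-- A1 -/
lemma sum_rootMult_eq {p : ℂ[X]} (hp : p ≠ 0) (h : ∀ α, p.IsRoot α → α ∈ T) :
    ∑ α ∈ T, rootMultiplicity α p = p.natDegree := by
  classical
  have hsplit : p.natDegree = Multiset.card p.roots := by
    have := (splits_iff_card_roots.mp (IsAlgClosed.splits p)).symm
    simpa using this
  have hsub : p.roots.toFinset ⊆ T := fun a ha =>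
    h a (isRoot_of_mem_roots (Multiset.mem_toFinset.mp ha))
  rw [hsplit, ← Multiset.toFinset_sum_count_eq p.roots,
    ← Finset.sum_subset hsub (fun x _ hx => by
      exact rootMult_zero_of_not_root fun hroot =>
        hx (Multiset.mem_toFinset.mpr ((mem_roots hp).mpr hroot)))]
  exact Finset.sum_congr rfl fun α _ => (count_roots p).symm

/-- A2 -/
lemma sum_rootMult_le {p : ℂ[X]} (hp : p ≠ 0) :
    ∑ α ∈ T, rootMultiplicity α p ≤ p.natDegree := by
  classical
  calc ∑ α ∈ T, rootMultiplicity α p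
      = ∑ α ∈ T ∩ p.roots.toFinset, rootMultiplicity α p := by
        refine (Finset.sum_subset (Finset.inter_subset_left) fun x hx hx' => ?_).symm
        exact rootMult_zero_of_not_root fun hroot =>
          hx' (Finset.mem_inter.mpr ⟨hx, Multiset.mem_toFinset.mpr ((mem_roots hp).mpr hroot)⟩)
    _ ≤ ∑ α ∈ p.roots.toFinset, rootMultiplicity α p :=
        Finset.sum_le_sum_of_subset Finset.inter_subset_right
    _ = Multiset.card p.roots := by
        rw [← Multiset.toFinset_sum_count_eq p.roots]
        exact Finset.sum_congr rfl fun α _ => (count_roots p).symm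
    _ ≤ p.natDegree := card_roots' p

lemma pow_dvd_derivative {α : ℂ} {p : ℂ[X]} {m : ℕ}
    (h : (X - C α) ^ m ∣ p) : (X - C α) ^ (m - 1) ∣ derivative p := by
  obtain ⟨q, rfl⟩ := h
  rw [derivative_mul, derivative_pow]
  refine dvd_add ?_ ?_
  · exact Dvd.dvd.mul_right (Dvd.dvd.mul_right (Dvd.dvd.mul_left (pow_dvd_pow _ (by omega)) _) _) q
  · exact Dvd.dvd.mul_right (pow_dvd_pow _ (by omega)) _

lemma pow_dvd_iterate_derivative {α : ℂ} {p : ℂ[X]} {m : ℕ} (n : ℕ)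
    (h : (X - C α) ^ m ∣ p) : (X - C α) ^ (m - n) ∣ (derivative)^[n] p := by
  induction n with
  | zero => simpa using h
  | succ n ih =>
    rw [Function.iterate_succ_apply']
    have := pow_dvd_derivative ih
    rwa [Nat.sub_sub] at this


noncomputable def Wr {k : ℕ} (f : Fin k → ℂ[X]) : ℂ[X] :=
  (Matrix.of fun i j : Fin k => (derivative)^[(j : ℕ)] (f i)).det

lemma iter_der_sum {ι : Type*} (s : Finset ι) (g : ι → ℂ[X]) (n : ℕ) :
    (derivative)^[n] (∑ i ∈ s, g i) = ∑ i ∈ s, (derivative)^[n] (g i) := by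
  induction n with
  | zero => simp
  | succ n ih => simp [Function.iterate_succ_apply', ih, derivative_sum]

lemma iter_der_smul (c : ℂ) (p : ℂ[X]) (n : ℕ) :
    (derivative)^[n] (c • p) = c • (derivative)^[n] p := by
  induction n with
  | zero => simp
  | succ n ih => rw [Function.iterate_succ_apply', ih, derivative_smul,
      Function.iterate_succ_apply']

/-- ℕ sub-sum inequality -/
lemma sum_tsub_ge {k : ℕ} (a b : Fin k → ℕ) :
    (∑ i, a i) - (∑ i, b i) ≤ ∑ i, (a i - b i) := by
  rw [tsub_le_iff_right]
  calc ∑ i, a i ≤ ∑ i, ((a i - b i) + b i) :=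
    Finset.sum_le_sum fun i _ => by omega
  _ = _ := Finset.sum_add_distrib

/-- B2 : multiplicity lower bound for the Wronskian -/
lemma pow_dvd_Wr {k : ℕ} {f : Fin k → ℂ[X]} {α : ℂ} (m : Fin k → ℕ)
    (hm : ∀ i, (X - C α) ^ (m i) ∣ f i) {M : ℕ} (hM : M + k.choose 2 ≤ ∑ i, m i) :
    (X - C α) ^ M ∣ Wr f := by
  rw [Wr, Matrix.det_apply']
  refine Finset.dvd_sum fun σ _ => Dvd.dvd.mul_left ?_ _
  have h1 : ∀ i : Fin k, (X - C α) ^ (m (σ i) - (i : ℕ)) ∣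
      (derivative)^[(i : ℕ)] (f (σ i)) := fun i =>
    pow_dvd_iterate_derivative _ (hm (σ i))
  have h2 : ∏ i : Fin k, (X - C α) ^ (m (σ i) - (i : ℕ)) ∣
      ∏ i : Fin k, (derivative)^[(i : ℕ)] (f (σ i)) :=
    Finset.prod_dvd_prod_of_dvd _ _ fun i _ => h1 i
  refine dvd_trans ?_ h2
  rw [Finset.prod_pow_eq_pow_sum]
  refine pow_dvd_pow _ ?_
  have h3 := sum_tsub_ge (fun i => m (σ i)) (fun i : Fin k => (i : ℕ))
  have h4 : ∑ i : Fin k, m (σ i) = ∑ i, m i := Equiv.sum_comp σ m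
  have h5 := sum_fin_id k
  omega

/-- helper: analysis of a permutation term -/
lemma term_zero_or_good {k : ℕ} (f : Fin k → ℂ[X]) (σ : Equiv.Perm (Fin k)) :
    (∃ i : Fin k, (f (σ i)).natDegree < (i : ℕ)) ∨
    (∀ i : Fin k, (i : ℕ) ≤ (f (σ i)).natDegree) := by
  by_cases h : ∀ i : Fin k, (i : ℕ) ≤ (f (σ i)).natDegree
  · exact Or.inr h
  · push_neg at h; exact Or.inl h

/-- B1 : degree bound -/
lemma natDegree_Wr {k : ℕ} {f : Fin k → ℂ[X]} (h : Wr f ≠ 0) :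
    (Wr f).natDegree + k.choose 2 ≤ ∑ i, (f i).natDegree := by
  classical
  set D := ∑ i, (f i).natDegree
  -- there is a "good" permutation, else Wr f = 0
  by_cases hgood : ∃ σ : Equiv.Perm (Fin k), ∀ i : Fin k, (i : ℕ) ≤ (f (σ i)).natDegree
  · have hCD : k.choose 2 ≤ D := by
      obtain ⟨σ, hσ⟩ := hgood
      have : ∑ i : Fin k, (i : ℕ) ≤ ∑ i : Fin k, (f (σ i)).natDegree :=
        Finset.sum_le_sum fun i _ => hσ i
      rw [sum_fin_id, Equiv.sum_comp σ (fun i => (f i).natDegree)] at this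
      exact this
    have hdeg : (Wr f).natDegree ≤ D - k.choose 2 := by
      rw [Wr, Matrix.det_apply']
      refine natDegree_sum_le_of_forall_le _ _ fun σ _ => ?_
      rcases term_zero_or_good f σ with ⟨i, hi⟩ | hσ
      · have : (derivative)^[(i : ℕ)] (f (σ i)) = 0 := iterate_derivative_eq_zero hi
        rw [show (∏ i : Fin k, (Matrix.of fun i j : Fin k =>
            (derivative)^[(j : ℕ)] (f i)) (σ i) i) = 0 from
          Finset.prod_eq_zero (Finset.mem_univ i) this]
        simp
      · refine le_trans (natDegree_mul_le) ?_
        have h0 : (((Equiv.Perm.sign σ : ℤ) : ℂ[X])).natDegree = 0 := natDegree_intCast _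
        rw [h0, zero_add]
        refine le_trans (natDegree_prod_le _ _) ?_
        have heq : ∀ i : Fin k, ((Matrix.of fun i j : Fin k =>
            (derivative)^[(j : ℕ)] (f i)) (σ i) i).natDegree ≤ (f (σ i)).natDegree - (i : ℕ) :=
          fun i => natDegree_iterate_derivative _ _
        refine le_trans (Finset.sum_le_sum fun i _ => heq i) ?_
        have : ∑ i : Fin k, ((f (σ i)).natDegree - (i : ℕ)) + k.choose 2 = D := by
          rw [← sum_fin_id k, ← Finset.sum_add_distrib]
          have : ∀ i : Fin k, (f (σ i)).natDegree - (i : ℕ) + (i : ℕ) = (f (σ i)).natDegree :=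
            fun i => by have := hσ i; omega
          rw [Finset.sum_congr rfl fun i _ => this i]
          exact Equiv.sum_comp σ (fun i => (f i).natDegree)
        omega
    omega
  · exfalso
    apply h
    rw [Wr, Matrix.det_apply']
    push_neg at hgood
    refine Finset.sum_eq_zero fun σ _ => ?_
    obtain ⟨i, hi⟩ := hgood σ
    rw [show (∏ i : Fin k, (Matrix.of fun i j : Fin k =>
        (derivative)^[(j : ℕ)] (f i)) (σ i) i) = 0 from
      Finset.prod_eq_zero (Finset.mem_univ i) (iterate_derivative_eq_zero hi)]
    simp

/-- determinant multilinearity: update a row with a combination of rows -/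
lemma det_updateRow_linear {n : Type*} [DecidableEq n] [Fintype n] {R : Type*} [CommRing R]
    (M : Matrix n n R) (ℓ : n) (c : n → R) :
    (M.updateRow ℓ (∑ i, c i • M i)).det = c ℓ * M.det := by
  classical
  have key : ∀ s : Finset n, (M.updateRow ℓ (∑ i ∈ s, c i • M i)).det
      = ∑ i ∈ s, c i * (M.updateRow ℓ (M i)).det := by
    intro s
    induction s using Finset.induction with
    | empty =>
      simp only [Finset.sum_empty]
      exact Matrix.det_eq_zero_of_row_eq_zero ℓ (fun j => by simp)
    | insert _ _ hx ih =>
      rw [Finset.sum_insert hx, Matrix.det_updateRow_add, Matrix.det_updateRow_smul,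
        ih, Finset.sum_insert hx]
  rw [key Finset.univ]
  rw [Finset.sum_eq_single ℓ (fun i _ hi => by
    rw [Matrix.det_updateRow_eq_zero hi, mul_zero]) (fun h => absurd (Finset.mem_univ ℓ) h)]
  rw [Matrix.updateRow_eq_self]

/-- B3/WrUpdate -/
lemma Wr_update {k : ℕ} (f : Fin k → ℂ[X]) (ℓ : Fin k) (c : Fin k → ℂ) :
    Wr (Function.update f ℓ (∑ i, c i • f i)) = C (c ℓ) * Wr f := by
  classical
  set M := Matrix.of fun i j : Fin k => (derivative)^[(j : ℕ)] (f i) with hM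
  have hrow : (fun j : Fin k => (derivative)^[(j : ℕ)] (∑ i, c i • f i))
      = ∑ i, (C (c i)) • M i := by
    funext j
    rw [iter_der_sum, Finset.sum_apply]
    refine Finset.sum_congr rfl fun x _ => ?_
    rw [iter_der_smul]
    simp only [Pi.smul_apply, hM, Matrix.of_apply, smul_eq_C_mul]
    rw [Algebra.smul_def]
    rfl
  have hmat : (Matrix.of fun i j : Fin k => (derivative)^[(j : ℕ)]
        ((Function.update f ℓ (∑ i, c i • f i)) i))
      = M.updateRow ℓ (∑ i, (C (c i)) • M i) := by
    ext i j : 2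
    rw [Matrix.updateRow_apply]
    by_cases hi : i = ℓ
    · subst hi
      rw [if_pos rfl, Matrix.of_apply, Function.update_self, ← hrow]
    · rw [if_neg hi, Matrix.of_apply, Function.update_of_ne hi]
      rfl
  rw [Wr, hmat, det_updateRow_linear M ℓ (fun i => C (c i))]
  rfl

/-- base case: distinct degrees -/
lemma Wr_ne_zero_of_inj {k : ℕ} (f : Fin k → ℂ[X]) (h0 : ∀ i, f i ≠ 0)
    (hinj : Function.Injective (fun i => (f i).natDegree)) : Wr f ≠ 0 := by
  classical
  set d : Fin k → ℕ := fun i => (f i).natDegree with hd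
  have hC : k.choose 2 ≤ ∑ i, d i := choose_two_le_sum d hinj
  set N : ℕ := (∑ i, d i) - k.choose 2 with hN
  set Q : Matrix (Fin k) (Fin k) ℂ :=
    Matrix.of (fun i j : Fin k => (f i).leadingCoeff * ((d i).descFactorial (j : ℕ) : ℂ)) with hQ
  have hcoeff : (Wr f).coeff N = Q.det := by
    rw [Wr, Matrix.det_apply', Matrix.det_apply', finset_sum_coeff]
    refine Finset.sum_congr rfl fun σ _ => ?_
    have hsign : ((Equiv.Perm.sign σ : ℤ) : ℂ[X]) = C ((Equiv.Perm.sign σ : ℤ) : ℂ) :=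
      (map_intCast (C : ℂ →+* ℂ[X]) _).symm
    rw [hsign, coeff_C_mul]
    congr 1
    rcases term_zero_or_good f σ with ⟨i, hi⟩ | hσ
    · rw [show (∏ i : Fin k, (Matrix.of fun i j : Fin k =>
          (derivative)^[(j : ℕ)] (f i)) (σ i) i) = 0 from
        Finset.prod_eq_zero (Finset.mem_univ i) (iterate_derivative_eq_zero hi)]
      rw [show (∏ i : Fin k, Q (σ i) i) = 0 from
        Finset.prod_eq_zero (Finset.mem_univ i) (by
          rw [hQ]
          simp only [Matrix.of_apply]
          rw [show ((d (σ i)).descFactorial (i : ℕ) : ℂ) = 0 by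
            rw [Nat.descFactorial_eq_zero_iff_lt.mpr hi, Nat.cast_zero], mul_zero])]
      simp
    · set e : Fin k → ℕ := fun i => d (σ i) - (i : ℕ) with he
      have hesum : ∑ i, e i = N := by
        have h1 : ∀ i : Fin k, e i + (i : ℕ) = d (σ i) := fun i => by
          have h := hσ i
          have hdi : d (σ i) = (f (σ i)).natDegree := rfl
          simp only [he]; omega
        have h2 : ∑ i, e i + k.choose 2 = ∑ i, d i := by
          rw [← sum_fin_id k, ← Finset.sum_add_distrib,
            Finset.sum_congr rfl fun i _ => h1 i]
          exact Equiv.sum_comp σ d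
        omega
      rw [← hesum, coeff_prod_top _ _ (fun j => by
        simpa using natDegree_iterate_derivative (f (σ j)) (j : ℕ))]
      refine Finset.prod_congr rfl fun i _ => ?_
      rw [Matrix.of_apply, coeff_iterate_derivative]
      have h3 : e i + (i : ℕ) = d (σ i) := by
        have h := hσ i
        have hdi : d (σ i) = (f (σ i)).natDegree := rfl
        simp only [he]; omega
      rw [h3, hQ]
      simp only [Matrix.of_apply]
      rw [nsmul_eq_mul, mul_comm]
      rfl
  have hQdet : Q.det ≠ 0 := by
    have hfac : Q.det = (∏ i, (f i).leadingCoeff) *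
        (Matrix.of (fun i j : Fin k =>
          (descPochhammer ℂ (j : ℕ)).eval ((d i : ℂ)))).det := by
      rw [← Matrix.det_mul_column]
      congr 1
      ext i j : 2
      simp only [Matrix.of_apply, hQ]
      rw [descPochhammer_eval_eq_descFactorial]
    have hvand : (Matrix.of (fun i j : Fin k =>
        (descPochhammer ℂ (j : ℕ)).eval ((d i : ℂ)))).det ≠ 0 := by
      rw [← Matrix.det_eval_matrixOfPolynomials_eq_det_vandermonde
        (fun i : Fin k => (d i : ℂ)) (fun j : Fin k => descPochhammer ℂ (j : ℕ))
        (fun i => descPochhammer_natDegree ℂ (i : ℕ))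
        (fun i => monic_descPochhammer ℂ (i : ℕ))]
      rw [Matrix.det_vandermonde_ne_zero_iff]
      intro x y hxy
      exact hinj (Nat.cast_injective hxy)
    rw [hfac]
    exact mul_ne_zero (Finset.prod_ne_zero_iff.mpr fun i _ =>
      leadingCoeff_ne_zero.mpr (h0 i)) hvand
  intro hW
  rw [hW, coeff_zero] at hcoeff
  exact hQdet hcoeff.symm

/-- B4 -/
lemma Wr_ne_zero {k : ℕ} {f : Fin k → ℂ[X]} (hli : LinearIndependent ℂ f) : Wr f ≠ 0 := by
  classical
  suffices h : ∀ N : ℕ, ∀ f : Fin k → ℂ[X], LinearIndependent ℂ f →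
      ∑ i, (f i).natDegree ≤ N → Wr f ≠ 0 from
    h (∑ i, (f i).natDegree) f hli le_rfl
  intro N
  induction N using Nat.strong_induction_on with
  | _ N ih =>
    intro f hli hN
    by_cases hinj : Function.Injective (fun i => (f i).natDegree)
    · exact Wr_ne_zero_of_inj f (fun i => hli.ne_zero i) hinj
    · rw [Function.not_injective_iff] at hinj
      obtain ⟨a, b, hdeq, hne⟩ := hinj
      set c : ℂ := (f a).leadingCoeff / (f b).leadingCoeff with hc
      set cv : Fin k → ℂ := fun i => if i = a then 1 else if i = b then -c else 0 with hcv
      have hp : (∑ i, cv i • f i) = f a - c • f b := by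
        rw [← Finset.sum_subset (Finset.subset_univ ({a, b} : Finset (Fin k)))
          (fun x _ hx => by
            simp only [Finset.mem_insert, Finset.mem_singleton, not_or] at hx
            simp [hcv, hx.1, hx.2]),
          Finset.sum_pair hne]
        simp [hcv, hne, if_neg (Ne.symm hne)]
        ring
      set f' := Function.update f a (∑ i, cv i • f i) with hf'
      have hWr : Wr f' = Wr f := by
        rw [hf', Wr_update f a cv]
        simp [hcv]
      have hpne : (∑ i, cv i • f i) ≠ 0 := by
        intro h
        have := Fintype.linearIndependent_iff.mp hli cv h a
        simp [hcv] at this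
      have hfb0 : (f b).leadingCoeff ≠ 0 := leadingCoeff_ne_zero.mpr (hli.ne_zero b)
      have hple : (∑ i, cv i • f i).natDegree ≤ (f a).natDegree := by
        rw [hp]
        refine le_trans (natDegree_sub_le _ _) ?_
        simp only [max_le_iff]
        refine ⟨le_rfl, le_trans (natDegree_smul_le _ _) ?_⟩
        omega
      have hpcoeff : (∑ i, cv i • f i).coeff ((f a).natDegree) = 0 := by
        rw [hp, coeff_sub, coeff_smul, hdeq, coeff_natDegree, smul_eq_mul, hc,
          div_mul_cancel₀ _ hfb0, ← hdeq, coeff_natDegree, sub_self]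
      have hplt : (∑ i, cv i • f i).natDegree < (f a).natDegree := by
        rcases lt_or_eq_of_le hple with h | h
        · exact h
        · exfalso
          apply hpne
          apply leadingCoeff_eq_zero.mp
          rw [leadingCoeff, h]
          exact hpcoeff
      have hli' : LinearIndependent ℂ f' := by
        rw [Fintype.linearIndependent_iff]
        intro t ht
        set sfun : Fin k → ℂ := fun i => t i + (if i = b then t a * (-c) else 0) with hsfun
        have hexp : ∑ i, t i • f' i = ∑ i, sfun i • f i := by
          calc ∑ i, t i • f' i
              = t a • (f a - c • f b) + ∑ i ∈ Finset.univ \ {a}, t i • f i := by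
                rw [Finset.sum_congr rfl (fun i (_ : i ∈ Finset.univ) =>
                  show t i • f' i
                      = Function.update (fun j => t j • f j) a
                        (t a • (f a - c • f b)) i from by
                    by_cases hia : i = a
                    · subst hia
                      rw [Function.update_self, hf', Function.update_self, hp]
                    · rw [Function.update_of_ne hia, hf', Function.update_of_ne hia]),
                  Finset.sum_update_of_mem (Finset.mem_univ a)]
            _ = (∑ i, t i • f i) + (t a * (-c)) • f b := by
                rw [Finset.sum_eq_sum_sdiff_singleton_add (Finset.mem_univ a)
                  (fun i => t i • f i), smul_sub, smul_smul]
                rw [show t a * (-c) = -(t a * c) by ring, neg_smul]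
                abel
            _ = ∑ i, sfun i • f i := by
                rw [show (∑ i, sfun i • f i)
                    = ∑ i, t i • f i + ∑ i, (if i = b then t a * (-c) else 0) • f i from by
                  rw [← Finset.sum_add_distrib]
                  exact Finset.sum_congr rfl fun i _ => by rw [hsfun, add_smul]]
                congr 1
                rw [Finset.sum_congr rfl (fun i (_ : i ∈ Finset.univ) =>
                  show (if i = b then t a * (-c) else 0) • f i
                      = (if i = b then (t a * (-c)) • f i else 0) from by
                    split <;> simp),
                  Finset.sum_ite_eq' Finset.univ b (fun i => (t a * (-c)) • f i)]
                simp
        rw [hexp] at ht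
        have hs := Fintype.linearIndependent_iff.mp hli sfun ht
        intro i
        have hsa := hs a
        have hsb := hs b
        have hsi := hs i
        simp only [hsfun, if_neg (show a ≠ b from hne)] at hsa
        simp only [add_zero] at hsa
        by_cases hib : i = b
        · subst hib
          simp only [hsfun, if_pos rfl, hsa] at hsb
          simpa using hsb
        · simp only [hsfun, if_neg hib, add_zero] at hsi
          exact hsi
      have hmeasure : ∑ i, (f' i).natDegree < ∑ i, (f i).natDegree := by
        have h1 : (fun i => (f' i).natDegree)
            = Function.update (fun i => (f i).natDegree) a ((∑ i, cv i • f i).natDegree) := by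
          funext i
          rw [hf', Function.update_apply, Function.update_apply]
          split <;> rfl
        rw [h1, Finset.sum_update_of_mem (Finset.mem_univ a),
          Finset.sum_eq_sum_sdiff_singleton_add (Finset.mem_univ a)
            (fun i => (f i).natDegree)]
        omega
      have := ih (∑ i, (f' i).natDegree) (by omega) f' hli' le_rfl
      rwa [hWr] at this

section Circuits

open Polynomial Finset

variable {ι : Type*} [DecidableEq ι] (s : Finset ι) (F : ι → ℂ[X])

/-- a relation among the family F supported in s -/
def Rel (c : ι → ℂ) : Prop := (∀ i ∉ s, c i = 0) ∧ ∑ i ∈ s, c i • F i = 0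

noncomputable def supp (c : ι → ℂ) : Finset ι :=
  s.filter (fun i => c i ≠ 0)

/-- a circuit: a support-minimal nonzero relation -/
def Circ (c : ι → ℂ) : Prop :=
  Rel s F c ∧ (supp s c).Nonempty ∧
    ∀ c', Rel s F c' → supp s c' ⊆ supp s c → (supp s c').Nonempty → supp s c' = supp s c

variable {s F}

lemma mem_supp {c : ι → ℂ} {i : ι} : i ∈ supp s c ↔ i ∈ s ∧ c i ≠ 0 := by
  simp [supp]

lemma supp_subset {c : ι → ℂ} : supp s c ⊆ s := Finset.filter_subset _ _

lemma not_mem_supp_of_zero {c : ι → ℂ} {i : ι} (h : c i = 0) : i ∉ supp s c := by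
  simp [mem_supp, h]

lemma zero_of_mem_s_not_supp {c : ι → ℂ} {i : ι} (hi : i ∈ s) (h : i ∉ supp s c) : c i = 0 := by
  by_contra hc
  exact h (mem_supp.mpr ⟨hi, hc⟩)

lemma eq_zero_of_supp_empty {c : ι → ℂ} (hrel : Rel s F c) (h : supp s c = ∅) : c = 0 := by
  funext i
  by_cases hi : i ∈ s
  · exact zero_of_mem_s_not_supp hi (by rw [h]; exact Finset.notMem_empty i)
  · exact hrel.1 i hi

lemma Rel.sub {c d : ι → ℂ} (hc : Rel s F c) (hd : Rel s F d) : Rel s F (c - d) := by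
  refine ⟨fun i hi => by simp [hc.1 i hi, hd.1 i hi], ?_⟩
  have : ∑ i ∈ s, (c - d) i • F i = ∑ i ∈ s, (c i • F i - d i • F i) :=
    Finset.sum_congr rfl fun i _ => by simp [sub_smul]
  rw [this, Finset.sum_sub_distrib, hc.2, hd.2, sub_zero]

lemma Rel.smul {c : ι → ℂ} (hc : Rel s F c) (t : ℂ) : Rel s F (t • c) := by
  refine ⟨fun i hi => by simp [hc.1 i hi], ?_⟩
  have : ∑ i ∈ s, (t • c) i • F i = t • ∑ i ∈ s, c i • F i := by
    rw [Finset.smul_sum]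
    exact Finset.sum_congr rfl fun i _ => by simp [smul_smul]
  rw [this, hc.2, smul_zero]

lemma Rel.add {c d : ι → ℂ} (hc : Rel s F c) (hd : Rel s F d) : Rel s F (c + d) := by
  have := hc.sub (hd.smul (-1))
  simpa [sub_eq_add_neg] using this

lemma Rel.zero : Rel s F (0 : ι → ℂ) := ⟨fun _ _ => rfl, by simp⟩

lemma supp_smul_eq {c : ι → ℂ} {t : ℂ} (ht : t ≠ 0) : supp s (t • c) = supp s c := by
  ext i
  simp [mem_supp, ht]

lemma supp_sub_subset {c d : ι → ℂ} : supp s (c - d) ⊆ supp s c ∪ supp s d := by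
  intro i hi
  rw [mem_supp] at hi
  rcases hi with ⟨hs, hne⟩
  by_cases hc : c i = 0
  · refine Finset.mem_union_right _ (mem_supp.mpr ⟨hs, ?_⟩)
    intro hd; apply hne; simp [hc, hd]
  · exact Finset.mem_union_left _ (mem_supp.mpr ⟨hs, hc⟩)

/-- elimination form: v - (v j / z j) • z kills coordinate j -/
noncomputable def elim (v z : ι → ℂ) (j : ι) : ι → ℂ := v - (v j / z j) • z

lemma elim_rel {v z : ι → ℂ} (hv : Rel s F v) (hz : Rel s F z) (j : ι) :
    Rel s F (elim v z j) := hv.sub (hz.smul _)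

lemma elim_supp {v z : ι → ℂ} {j : ι} (hj : j ∈ supp s z) :
    supp s (elim v z j) ⊆ (supp s v ∪ supp s z).erase j := by
  intro i hi
  rw [Finset.mem_erase]
  constructor
  · intro hij
    subst hij
    rw [mem_supp] at hi
    apply hi.2
    have hzj : z i ≠ 0 := (mem_supp.mp hj).2
    simp [elim, div_mul_cancel₀ _ hzj]
  · have h2 : i ∈ supp s v ∪ supp s ((v j / z j) • z) := supp_sub_subset hi
    rcases Finset.mem_union.mp h2 with h | h
    · exact Finset.mem_union_left _ h
    · refine Finset.mem_union_right _ ?_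
      rw [mem_supp] at h ⊢
      exact ⟨h.1, fun h0 => h.2 (by simp [h0])⟩

lemma elim_apply_of_zero {v z : ι → ℂ} {j i : ι} (h : z i = 0) : elim v z j i = v i := by
  simp [elim, h]

/-- E1: every coordinate in the support of a relation lies in a circuit inside it -/
lemma exists_circ {a : ι} : ∀ (v : ι → ℂ), Rel s F v → a ∈ supp s v →
    ∃ w, Circ s F w ∧ a ∈ supp s w ∧ supp s w ⊆ supp s v := by
  suffices h : ∀ n (v : ι → ℂ), Rel s F v → a ∈ supp s v → (supp s v).card ≤ n →
      ∃ w, Circ s F w ∧ a ∈ supp s w ∧ supp s w ⊆ supp s v from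
    fun v hv ha => h (supp s v).card v hv ha le_rfl
  intro n
  induction n using Nat.strong_induction_on with
  | _ n ih =>
    intro v hv ha hn
    by_cases hmin : ∀ c', Rel s F c' → supp s c' ⊆ supp s v → (supp s c').Nonempty →
        supp s c' = supp s v
    · exact ⟨v, ⟨hv, ⟨a, ha⟩, hmin⟩, ha, le_refl _⟩
    · push_neg at hmin
      obtain ⟨z, hzrel, hzsub, hzne, hzneq⟩ := hmin
      have hzcard : (supp s z).card < (supp s v).card :=
        Finset.card_lt_card (lt_of_le_of_ne hzsub hzneq)
      by_cases haz : a ∈ supp s z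
      · obtain ⟨w, hw, haw, hws⟩ := ih (supp s z).card (by omega) z hzrel haz le_rfl
        exact ⟨w, hw, haw, hws.trans hzsub⟩
      · obtain ⟨j, hj⟩ := hzne
        have hvrel' := elim_rel hv hzrel j
        have ha' : a ∈ supp s (elim v z j) := by
          rw [mem_supp] at ha ⊢
          refine ⟨ha.1, ?_⟩
          rw [elim_apply_of_zero (zero_of_mem_s_not_supp ha.1 haz)]
          exact ha.2
        have hsub' : supp s (elim v z j) ⊆ (supp s v).erase j := by
          refine (elim_supp hj).trans ?_
          intro i hi
          rw [Finset.mem_erase] at hi ⊢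
          exact ⟨hi.1, by
            rcases Finset.mem_union.mp hi.2 with h | h
            · exact h
            · exact hzsub h⟩
        have hcard' : (supp s (elim v z j)).card < (supp s v).card := by
          calc (supp s (elim v z j)).card ≤ ((supp s v).erase j).card :=
            Finset.card_le_card hsub'
          _ < (supp s v).card := Finset.card_erase_lt_of_mem (hzsub hj)
        obtain ⟨w, hw, haw, hws⟩ := ih (supp s (elim v z j)).card (by omega)
          _ hvrel' ha' le_rfl
        exact ⟨w, hw, haw, hws.trans (hsub'.trans (Finset.erase_subset _ _))⟩

/-- P1: a relation supported inside a circuit is a scalar multiple of it -/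
lemma circ_minimal {w z : ι → ℂ} (hw : Circ s F w) (hz : Rel s F z)
    (hsub : supp s z ⊆ supp s w) : ∃ t : ℂ, z = t • w := by
  rcases (supp s z).eq_empty_or_nonempty with he | hne
  · exact ⟨0, by rw [eq_zero_of_supp_empty hz he]; simp⟩
  · obtain ⟨j, hj⟩ := hne
    have hwj : w j ≠ 0 := (mem_supp.mp (hsub hj)).2
    refine ⟨z j / w j, ?_⟩
    set u : ι → ℂ := z - (z j / w j) • w with hu
    have hurel : Rel s F u := hz.sub (hw.1.smul _)
    have husub : supp s u ⊆ (supp s w).erase j := by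
      have h1 : supp s u ⊆ (supp s z ∪ supp s w).erase j := elim_supp (hsub hj)
      refine h1.trans ?_
      intro i hi
      rw [Finset.mem_erase] at hi ⊢
      exact ⟨hi.1, by
        rcases Finset.mem_union.mp hi.2 with h | h
        · exact hsub h
        · exact h⟩
    have : supp s u = ∅ := by
      by_contra hne'
      have := hw.2.2 u hurel (husub.trans (Finset.erase_subset _ _))
        (Finset.nonempty_of_ne_empty hne')
      have hjmem : j ∈ supp s u := by rw [this]; exact hsub hj
      exact absurd (husub hjmem) (by simp)
    have hu0 : z - (z j / w j) • w = 0 := eq_zero_of_supp_empty hurel this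
    rwa [sub_eq_zero] at hu0

/-- Whitney-style transitivity for circuits -/
lemma circ_trans {a b : ι} :
    ∀ (w1 w2 : ι → ℂ), Circ s F w1 → Circ s F w2 → a ∈ supp s w1 → b ∈ supp s w2 →
    (supp s w1 ∩ supp s w2).Nonempty →
    ∃ w, Circ s F w ∧ a ∈ supp s w ∧ b ∈ supp s w := by
  suffices h : ∀ n (w1 w2 : ι → ℂ), Circ s F w1 → Circ s F w2 → a ∈ supp s w1 →
      b ∈ supp s w2 → (supp s w1 ∩ supp s w2).Nonempty →
      (supp s w1 ∪ supp s w2).card ≤ n →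
      ∃ w, Circ s F w ∧ a ∈ supp s w ∧ b ∈ supp s w from
    fun w1 w2 h1 h2 ha hb hi => h _ w1 w2 h1 h2 ha hb hi le_rfl
  intro n
  induction n using Nat.strong_induction_on with
  | _ n ih =>
    intro w1 w2 hw1 hw2 ha hb hint hcard
    by_cases hbw1 : b ∈ supp s w1
    · exact ⟨w1, hw1, ha, hbw1⟩
    by_cases haw2 : a ∈ supp s w2
    · exact ⟨w2, hw2, haw2, hb⟩
    obtain ⟨e, he⟩ := hint
    rw [Finset.mem_inter] at he
    have hw1e : w1 e ≠ 0 := (mem_supp.mp he.1).2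
    have hw2e : w2 e ≠ 0 := (mem_supp.mp he.2).2
    -- step: given circuits (c1 ∋ x) and (c2) with common point e, x ∉ supp c2,
    -- produce a circuit through x avoiding e inside the union
    have step : ∀ (c1 c2 : ι → ℂ) (x : ι), Circ s F c1 → Circ s F c2 →
        x ∈ supp s c1 → x ∉ supp s c2 → e ∈ supp s c1 → e ∈ supp s c2 →
        ∃ w3, Circ s F w3 ∧ x ∈ supp s w3 ∧
          supp s w3 ⊆ (supp s c1 ∪ supp s c2).erase e := by
      intro c1 c2 x hc1 hc2 hx hxn he1 he2
      set z := elim c1 c2 e with hz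
      have hzrel : Rel s F z := elim_rel hc1.1 hc2.1 e
      have hxz : x ∈ supp s z := by
        rw [mem_supp] at hx ⊢
        refine ⟨hx.1, ?_⟩
        rw [hz, elim_apply_of_zero (zero_of_mem_s_not_supp hx.1 hxn)]
        exact hx.2
      obtain ⟨w3, hw3, hxw3, hsub3⟩ := exists_circ z hzrel hxz
      exact ⟨w3, hw3, hxw3, hsub3.trans (elim_supp he2)⟩
    -- circuit w3 through a avoiding e
    obtain ⟨w3, hw3, haw3, hsub3⟩ := step w1 w2 a hw1 hw2 ha haw2 he.1 he.2
    by_cases hbw3 : b ∈ supp s w3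
    · exact ⟨w3, hw3, haw3, hbw3⟩
    have hew3 : e ∉ supp s w3 := fun h => by
      have := hsub3 h; rw [Finset.mem_erase] at this; exact this.1 rfl
    -- w3 meets w2
    have hw32 : (supp s w3 ∩ supp s w2).Nonempty := by
      by_contra hcon
      rw [Finset.not_nonempty_iff_eq_empty] at hcon
      have hsub : supp s w3 ⊆ supp s w1 := by
        intro i hi
        have h2 := hsub3 hi
        rw [Finset.mem_erase] at h2
        rcases Finset.mem_union.mp h2.2 with h | h
        · exact h
        · exact absurd (Finset.mem_inter.mpr ⟨hi, h⟩) (by rw [hcon]; simp)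
      obtain ⟨t, ht⟩ := circ_minimal hw1 hw3.1 hsub
      have htne : t ≠ 0 := by
        intro h0
        obtain ⟨j, hj⟩ := hw3.2.1
        rw [ht, h0] at hj
        simp [mem_supp] at hj
      have : supp s w3 = supp s w1 := by rw [ht, supp_smul_eq htne]
      rw [this] at hew3
      exact hew3 he.1
    -- minimality trick: compare unions
    have hUsub3 : supp s w3 ∪ supp s w2 ⊆ supp s w1 ∪ supp s w2 := by
      intro i hi
      rcases Finset.mem_union.mp hi with h | h
      · have h2 := hsub3 h
        rw [Finset.mem_erase] at h2
        exact h2.2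
      · exact Finset.mem_union_right _ h
    rcases lt_or_ge ((supp s w3 ∪ supp s w2).card) ((supp s w1 ∪ supp s w2).card) with hlt | hge
    · exact ih ((supp s w3 ∪ supp s w2).card) (by omega) w3 w2 hw3 hw2 haw3 hb hw32 le_rfl
    · have hUeq : supp s w3 ∪ supp s w2 = supp s w1 ∪ supp s w2 :=
        Finset.eq_of_subset_of_card_le hUsub3 hge
      have hsub13 : supp s w1 \ supp s w2 ⊆ supp s w3 := by
        intro i hi
        rw [Finset.mem_sdiff] at hi
        have : i ∈ supp s w3 ∪ supp s w2 := by
          rw [hUeq]; exact Finset.mem_union_left _ hi.1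
        rcases Finset.mem_union.mp this with h | h
        · exact h
        · exact absurd h hi.2
      -- symmetric: circuit w4 through b avoiding e
      obtain ⟨w4, hw4, hbw4, hsub4⟩ := step w2 w1 b hw2 hw1 hb hbw1 he.2 he.1
      by_cases haw4 : a ∈ supp s w4
      · exact ⟨w4, hw4, haw4, hbw4⟩
      have hew4 : e ∉ supp s w4 := fun h => by
        have := hsub4 h; rw [Finset.mem_erase] at this; exact this.1 rfl
      have hw41 : (supp s w1 ∩ supp s w4).Nonempty := by
        by_contra hcon
        rw [Finset.not_nonempty_iff_eq_empty] at hcon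
        have hsub : supp s w4 ⊆ supp s w2 := by
          intro i hi
          have h2 := hsub4 hi
          rw [Finset.mem_erase] at h2
          rcases Finset.mem_union.mp h2.2 with h | h
          · exact h
          · exact absurd (Finset.mem_inter.mpr ⟨h, hi⟩) (by rw [hcon]; simp)
        obtain ⟨t, ht⟩ := circ_minimal hw2 hw4.1 hsub
        have htne : t ≠ 0 := by
          intro h0
          obtain ⟨j, hj⟩ := hw4.2.1
          rw [ht, h0] at hj
          simp [mem_supp] at hj
        have : supp s w4 = supp s w2 := by rw [ht, supp_smul_eq htne]
        rw [this] at hew4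
        exact hew4 he.2
      have hUsub4 : supp s w1 ∪ supp s w4 ⊆ supp s w1 ∪ supp s w2 := by
        intro i hi
        rcases Finset.mem_union.mp hi with h | h
        · exact Finset.mem_union_left _ h
        · have h2 := hsub4 h
          rw [Finset.mem_erase] at h2
          rcases Finset.mem_union.mp h2.2 with h' | h'
          · exact Finset.mem_union_right _ h'
          · exact Finset.mem_union_left _ h'
      rcases lt_or_ge ((supp s w1 ∪ supp s w4).card) ((supp s w1 ∪ supp s w2).card)
        with hlt4 | hge4
      · exact ih ((supp s w1 ∪ supp s w4).card) (by omega) w1 w4 hw1 hw4 ha hbw4 hw41 le_rfl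
      · have hUeq4 : supp s w1 ∪ supp s w4 = supp s w1 ∪ supp s w2 :=
          Finset.eq_of_subset_of_card_le hUsub4 hge4
        have hsub24 : supp s w2 \ supp s w1 ⊆ supp s w4 := by
          intro i hi
          rw [Finset.mem_sdiff] at hi
          have : i ∈ supp s w1 ∪ supp s w4 := by
            rw [hUeq4]; exact Finset.mem_union_right _ hi.1
          rcases Finset.mem_union.mp this with h | h
          · exact absurd h hi.2
          · exact h
        by_cases h34 : (supp s w3 ∩ supp s w4).Nonempty
        · -- strictly smaller union: both avoid e
          have hU34 : supp s w3 ∪ supp s w4 ⊆ (supp s w1 ∪ supp s w2).erase e := by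
            intro i hi
            rw [Finset.mem_erase]
            rcases Finset.mem_union.mp hi with h | h
            · have h2 := hsub3 h; rw [Finset.mem_erase] at h2
              exact ⟨h2.1, h2.2⟩
            · have h2 := hsub4 h; rw [Finset.mem_erase] at h2
              refine ⟨h2.1, ?_⟩
              rcases Finset.mem_union.mp h2.2 with h' | h'
              · exact Finset.mem_union_right _ h'
              · exact Finset.mem_union_left _ h'
          have hlt34 : (supp s w3 ∪ supp s w4).card < (supp s w1 ∪ supp s w2).card := by
            calc (supp s w3 ∪ supp s w4).card ≤ ((supp s w1 ∪ supp s w2).erase e).card :=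
              Finset.card_le_card hU34
            _ < (supp s w1 ∪ supp s w2).card := Finset.card_erase_lt_of_mem
              (Finset.mem_union_left _ he.1)
          exact ih ((supp s w3 ∪ supp s w4).card) (by omega) w3 w4 hw3 hw4 haw3 hbw4 h34 le_rfl
        · -- disjoint: contradiction via P1
          exfalso
          rw [Finset.not_nonempty_iff_eq_empty] at h34
          have hsub31 : supp s w3 ⊆ supp s w1 := by
            intro i hi
            have h2 := hsub3 hi
            rw [Finset.mem_erase] at h2
            rcases Finset.mem_union.mp h2.2 with h | h
            · exact h
            · by_cases hiw1 : i ∈ supp s w1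
              · exact hiw1
              · have : i ∈ supp s w4 := hsub24 (Finset.mem_sdiff.mpr ⟨h, hiw1⟩)
                exact absurd (Finset.mem_inter.mpr ⟨hi, this⟩) (by rw [h34]; simp)
          obtain ⟨t, ht⟩ := circ_minimal hw1 hw3.1 hsub31
          have htne : t ≠ 0 := by
            intro h0
            obtain ⟨j, hj⟩ := hw3.2.1
            rw [ht, h0] at hj
            simp [mem_supp] at hj
          have : supp s w3 = supp s w1 := by rw [ht, supp_smul_eq htne]
          rw [this] at hew3
          exact hew3 he.1

/-- restriction of a relation to the connected component of `a` is a relation -/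
lemma comp_restrict {a : ι} (A : Finset ι)
    (hAmem : ∀ i, i ∈ A ↔ i ∈ s ∧ (i = a ∨
      ∃ w, Circ s F w ∧ a ∈ supp s w ∧ i ∈ supp s w)) :
    ∀ (v : ι → ℂ), Rel s F v → Rel s F (fun i => if i ∈ A then v i else 0) := by
  classical
  suffices h : ∀ n (v : ι → ℂ), Rel s F v → (supp s v).card ≤ n →
      Rel s F (fun i => if i ∈ A then v i else 0) from
    fun v hv => h (supp s v).card v hv le_rfl
  intro n
  induction n using Nat.strong_induction_on with
  | _ n ih =>
    intro v hv hn
    rcases (supp s v).eq_empty_or_nonempty with hemp | ⟨j, hj⟩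
    · have hv0 := eq_zero_of_supp_empty hv hemp
      subst hv0
      simpa [Pi.zero_def] using Rel.zero (s := s) (F := F)
    · obtain ⟨w, hw, hjw, hws⟩ := exists_circ v hv hj
      have hwj : w j ≠ 0 := (mem_supp.mp hjw).2
      set v' := elim v w j with hv'
      have hv'rel : Rel s F v' := elim_rel hv hw.1 j
      have hv'sub : supp s v' ⊆ (supp s v).erase j := by
        refine (elim_supp hjw).trans ?_
        intro i hi
        rw [Finset.mem_erase] at hi ⊢
        refine ⟨hi.1, ?_⟩
        rcases Finset.mem_union.mp hi.2 with h | h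
        · exact h
        · exact hws h
      have hv'card : (supp s v').card < (supp s v).card := by
        calc (supp s v').card ≤ ((supp s v).erase j).card := Finset.card_le_card hv'sub
        _ < _ := Finset.card_erase_lt_of_mem (hws hjw)
      have ihv' := ih (supp s v').card (by omega) v' hv'rel le_rfl
      have hwA : Rel s F (fun i => if i ∈ A then w i else 0) := by
        by_cases hinter : (supp s w ∩ A).Nonempty
        · have hsubA : supp s w ⊆ A := by
            obtain ⟨i0, hi0⟩ := hinter
            rw [Finset.mem_inter] at hi0
            intro i hi
            rw [hAmem]
            refine ⟨supp_subset hi, ?_⟩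
            have hi0A := (hAmem i0).mp hi0.2
            rcases hi0A.2 with rfl | ⟨w0, hw0, haw0, hi0w0⟩
            · exact Or.inr ⟨w, hw, hi0.1, hi⟩
            · by_cases hia : i = a
              · exact Or.inl hia
              · obtain ⟨w', hw', haw', hiw'⟩ := circ_trans w0 w hw0 hw haw0 hi
                  ⟨i0, Finset.mem_inter.mpr ⟨hi0w0, hi0.1⟩⟩
                exact Or.inr ⟨w', hw', haw', hiw'⟩
          have : (fun i => if i ∈ A then w i else 0) = w := by
            funext i
            by_cases hiA : i ∈ A
            · simp [hiA]
            · rw [if_neg hiA]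
              by_cases his : i ∈ s
              · by_contra hne
                exact hiA (hsubA (mem_supp.mpr ⟨his, fun h => hne h.symm⟩))
              · exact (hw.1.1 i his).symm
          rw [this]
          exact hw.1
        · have : (fun i => if i ∈ A then w i else 0) = (0 : ι → ℂ) := by
            funext i
            by_cases hiA : i ∈ A
            · rw [if_pos hiA]
              by_contra hne
              have his : i ∈ s := ((hAmem i).mp hiA).1
              have : i ∈ supp s w := mem_supp.mpr ⟨his, hne⟩
              exact hinter ⟨i, Finset.mem_inter.mpr ⟨this, hiA⟩⟩
            · simp [hiA]
          rw [this]
          exact Rel.zero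
      have hcomb : (fun i => if i ∈ A then v i else 0)
          = (fun i => if i ∈ A then v' i else 0)
            + (v j / w j) • (fun i => if i ∈ A then w i else 0) := by
        funext i
        by_cases hiA : i ∈ A
        · simp only [Pi.add_apply, Pi.smul_apply, if_pos hiA, smul_eq_mul]
          rw [hv']
          simp [elim]
          try ring
        · simp [hiA]
      rw [hcomb]
      exact ihv'.add (hwA.smul _)

/-- Under nondegeneracy any two distinct elements of s lie in a common circuit. -/
lemma exists_circuit_through
    (hsum : ∑ i ∈ s, F i = 0)
    (hnd : ∀ t ⊆ s, t.Nonempty → t ≠ s → ∑ i ∈ t, F i ≠ 0)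
    {a b : ι} (ha : a ∈ s) (hb : b ∈ s) (hab : a ≠ b) :
    ∃ w, Circ s F w ∧ a ∈ supp s w ∧ b ∈ supp s w := by
  classical
  set one : ι → ℂ := fun i => if i ∈ s then 1 else 0 with hone
  have honerel : Rel s F one := by
    refine ⟨fun i hi => by simp [hone, hi], ?_⟩
    rw [show ∑ i ∈ s, one i • F i = ∑ i ∈ s, F i from
      Finset.sum_congr rfl fun i hi => by simp [hone, hi]]
    exact hsum
  set A := s.filter (fun i => i = a ∨
    ∃ w, Circ s F w ∧ a ∈ supp s w ∧ i ∈ supp s w) with hA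
  have hAmem : ∀ i, i ∈ A ↔ i ∈ s ∧ (i = a ∨
      ∃ w, Circ s F w ∧ a ∈ supp s w ∧ i ∈ supp s w) := fun i => by
    rw [hA, Finset.mem_filter]
  have hAsub : A ⊆ s := fun i hi => ((hAmem i).mp hi).1
  have hres := comp_restrict A hAmem one honerel
  have hsumA : ∑ i ∈ A, F i = 0 := by
    have h2 := hres.2
    rw [Finset.sum_congr rfl (fun i hi =>
      show (if i ∈ A then one i else 0) • F i = if i ∈ A then F i else 0 from by
        by_cases hiA : i ∈ A
        · rw [if_pos hiA, if_pos hiA, hone]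
          simp [hAsub hiA]
        · simp [hiA])] at h2
    rw [Finset.sum_ite_mem, Finset.inter_eq_right.mpr hAsub] at h2
    exact h2
  have haA : a ∈ A := (hAmem a).mpr ⟨ha, Or.inl rfl⟩
  have hAeq : A = s := by
    by_contra hne
    exact hnd A hAsub ⟨a, haA⟩ hne hsumA
  have hbA : b ∈ A := hAeq ▸ hb
  rcases ((hAmem b).mp hbA).2 with rfl | ⟨w, hw, haw, hbw⟩
  · exact absurd rfl hab
  · exact ⟨w, hw, haw, hbw⟩

end Circuits

section Core

open Polynomial Finset

/-- pole-counting bound (ℤ-valued) -/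
noncomputable def Bz (T : Finset ℂ) (p q : ℂ[X]) : ℤ :=
  (∑ α ∈ T, max ((rootMultiplicity α q : ℤ) - (rootMultiplicity α p : ℤ)) 0)
  + max ((p.natDegree : ℤ) - (q.natDegree : ℤ)) 0

lemma rm_Wr_ge {k : ℕ} {f : Fin k → ℂ[X]} (hW : Wr f ≠ 0) (α : ℂ) :
    (((∑ i, rootMultiplicity α (f i) : ℕ)) : ℤ) - k.choose 2 ≤ rootMultiplicity α (Wr f) := by
  set S : ℕ := ∑ i, rootMultiplicity α (f i) with hS
  by_cases h : S ≤ k.choose 2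
  · have h1 : (S:ℤ) ≤ (k.choose 2 : ℤ) := by exact_mod_cast h
    have h2 : (0:ℤ) ≤ (rootMultiplicity α (Wr f) : ℤ) := Int.ofNat_nonneg _
    omega
  · have hdvd : (X - C α) ^ (S - k.choose 2) ∣ Wr f := by
      refine pow_dvd_Wr (fun i => rootMultiplicity α (f i))
        (fun i => pow_rootMultiplicity_dvd _ _) ?_
      rw [← hS]
      omega
    have h2 : S - k.choose 2 ≤ rootMultiplicity α (Wr f) :=
      (le_rootMultiplicity_iff hW).mpr hdvd
    omega

lemma sum_update_phi {β : Type*} [AddCommMonoid β] {k : ℕ} (f : Fin k → ℂ[X]) (ℓ : Fin k)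
    (p : ℂ[X]) (φ : ℂ[X] → β) :
    ∑ i, φ (Function.update f ℓ p i) = φ p + ∑ i ∈ Finset.univ \ {ℓ}, φ (f i) := by
  rw [Finset.sum_congr rfl (fun i (_ : i ∈ Finset.univ) =>
    show φ (Function.update f ℓ p i) = Function.update (fun j => φ (f j)) ℓ (φ p) i from by
      rw [Function.update_apply, Function.update_apply, apply_ite φ]),
    Finset.sum_update_of_mem (Finset.mem_univ ℓ)]

/-- The core Wronskian comparison bound. -/
lemma core_bound (T : Finset ℂ) {k : ℕ} (g : Fin k → ℂ[X])
    (hgT : ∀ i, ∀ α, (g i).IsRoot α → α ∈ T) (hli : LinearIndependent ℂ g)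
    {p : ℂ[X]} (hp0 : p ≠ 0) (hpT : ∀ α, p.IsRoot α → α ∈ T)
    (ℓ : Fin k) (c : Fin k → ℂ) (hcl : c ℓ ≠ 0) (hrep : p = ∑ i, c i • g i) :
    Bz T (g ℓ) p ≤ (k.choose 2 : ℤ) * ((T.card : ℤ) - 1) := by
  classical
  have hg0 : ∀ i, g i ≠ 0 := fun i => hli.ne_zero i
  set W := Wr g with hWdef
  have hW : W ≠ 0 := Wr_ne_zero hli
  set g' := Function.update g ℓ p with hg'
  have hWr' : Wr g' = C (c ℓ) * W := by
    rw [hg', hrep, Wr_update]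
  have hW' : Wr g' ≠ 0 := by
    rw [hWr']
    exact mul_ne_zero (fun h => hcl (by simpa using (C_eq_zero.mp h))) hW
  have hrm' : ∀ α : ℂ, rootMultiplicity α (Wr g') = rootMultiplicity α W := by
    intro α
    rw [hWr', rootMultiplicity_mul (by rw [← hWr']; exact hW')]
    rw [rootMultiplicity_C, zero_add]
  have hdeg' : (Wr g').natDegree = W.natDegree := by
    rw [hWr', natDegree_C_mul hcl]
  -- degree data
  set Sg : ℕ := ∑ i, (g i).natDegree with hSg
  set DS : ℕ := ∑ i ∈ Finset.univ \ {ℓ}, (g i).natDegree with hDS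
  have hSgsplit : Sg = (g ℓ).natDegree + DS := by
    rw [hSg, Finset.sum_eq_sum_sdiff_singleton_add (Finset.mem_univ ℓ)]
    ring
  have hX : W.natDegree + k.choose 2 ≤ Sg := natDegree_Wr hW
  have hY : W.natDegree + k.choose 2 ≤ p.natDegree + DS := by
    have h1 := natDegree_Wr hW'
    rw [hdeg', hg', sum_update_phi g ℓ p natDegree] at h1
    exact h1
  -- multiplicity data
  have hα : ∀ α ∈ T, max ((rootMultiplicity α p : ℤ) - (rootMultiplicity α (g ℓ) : ℤ)) 0
      ≤ (rootMultiplicity α W : ℤ) - (((∑ i, rootMultiplicity α (g i) : ℕ)) : ℤ) + k.choose 2 := by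
    intro α _
    have hx := rm_Wr_ge hW α
    rw [← hWdef] at hx
    have hy := rm_Wr_ge hW' α
    rw [hrm' α, hg', sum_update_phi g ℓ p (rootMultiplicity α)] at hy
    have hsplit : (∑ i, rootMultiplicity α (g i) : ℕ)
        = rootMultiplicity α (g ℓ) + ∑ i ∈ Finset.univ \ {ℓ}, rootMultiplicity α (g i) := by
      rw [Finset.sum_eq_sum_sdiff_singleton_add (Finset.mem_univ ℓ)]
      ring
    rw [Nat.cast_add] at hy
    omega
  -- sum the finite-place bounds
  have hsum1 : (∑ α ∈ T, max ((rootMultiplicity α p : ℤ) - (rootMultiplicity α (g ℓ) : ℤ)) 0)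
      ≤ (∑ α ∈ T, (rootMultiplicity α W : ℤ))
        - (∑ α ∈ T, (((∑ i, rootMultiplicity α (g i) : ℕ)) : ℤ))
        + (k.choose 2 : ℤ) * T.card := by
    calc (∑ α ∈ T, max ((rootMultiplicity α p : ℤ) - (rootMultiplicity α (g ℓ) : ℤ)) 0)
        ≤ ∑ α ∈ T, ((rootMultiplicity α W : ℤ)
            - (((∑ i, rootMultiplicity α (g i) : ℕ)) : ℤ) + k.choose 2) :=
          Finset.sum_le_sum hα
      _ = _ := by
          rw [Finset.sum_add_distrib, Finset.sum_sub_distrib, Finset.sum_const,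
            nsmul_eq_mul, mul_comm]
  have hrmle : (∑ α ∈ T, (rootMultiplicity α W : ℤ)) ≤ (W.natDegree : ℤ) := by
    have := sum_rootMult_le (T := T) hW
    push_cast
    exact_mod_cast this
  have hSm : (∑ α ∈ T, (((∑ i, rootMultiplicity α (g i) : ℕ)) : ℤ)) = (Sg : ℤ) := by
    have h1 : ∑ α ∈ T, ∑ i, rootMultiplicity α (g i)
        = ∑ i, ∑ α ∈ T, rootMultiplicity α (g i) := Finset.sum_comm
    have h2 : ∀ i : Fin k, ∑ α ∈ T, rootMultiplicity α (g i) = (g i).natDegree :=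
      fun i => sum_rootMult_eq (hg0 i) (hgT i)
    have h3 : (∑ α ∈ T, ∑ i, rootMultiplicity α (g i)) = Sg := by
      rw [h1, hSg]
      exact Finset.sum_congr rfl fun i _ => h2 i
    rw [← h3]
    push_cast
    rfl
  -- infinite place
  have hinf : max (((g ℓ).natDegree : ℤ) - (p.natDegree : ℤ)) 0
      ≤ ((Sg : ℤ) - (W.natDegree : ℤ)) - k.choose 2 := by
    push_cast at hX hY hSgsplit ⊢
    omega
  -- assemble
  rw [Bz]
  have hdp : ∑ α ∈ T, rootMultiplicity α p = p.natDegree := sum_rootMult_eq hp0 hpT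
  calc (∑ α ∈ T, max ((rootMultiplicity α p : ℤ) - (rootMultiplicity α (g ℓ) : ℤ)) 0)
      + max (((g ℓ).natDegree : ℤ) - (p.natDegree : ℤ)) 0
      ≤ ((∑ α ∈ T, (rootMultiplicity α W : ℤ))
          - (∑ α ∈ T, (((∑ i, rootMultiplicity α (g i) : ℕ)) : ℤ))
          + (k.choose 2 : ℤ) * T.card)
        + (((Sg : ℤ) - (W.natDegree : ℤ)) - k.choose 2) := add_le_add hsum1 hinf
    _ ≤ _ := by
        rw [hSm]
        have : (∑ α ∈ T, (rootMultiplicity α W : ℤ)) ≤ (W.natDegree : ℤ) := hrmle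
        ring_nf
        nlinarith [this]

lemma sum_equivFin {ι : Type*} (J : Finset ι) {β : Type*} [AddCommMonoid β] (G : ι → β) :
    ∑ j : Fin J.card, G ((J.equivFin.symm j : ι)) = ∑ x ∈ J, G x := by
  rw [← Finset.sum_coe_sort J G]
  exact Equiv.sum_comp J.equivFin.symm (fun x : {x // x ∈ J} => G (x : ι))

theorem master {ι : Type*} [DecidableEq ι] (T : Finset ℂ) (s : Finset ι) (F : ι → ℂ[X])
    (hF0 : ∀ i ∈ s, F i ≠ 0)
    (hFT : ∀ i ∈ s, ∀ α, (F i).IsRoot α → α ∈ T)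
    (hsum : ∑ i ∈ s, F i = 0)
    (hnd : ∀ t ⊆ s, t.Nonempty → t ≠ s → ∑ i ∈ t, F i ≠ 0)
    {a b : ι} (ha : a ∈ s) (hb : b ∈ s) :
    Bz T (F a) (F b) ≤ (((s.card - 1).choose 2 : ℤ)) * ((T.card : ℤ) + 1) := by
  classical
  by_cases hab : a = b
  · subst hab
    have h1 : Bz T (F a) (F a) = 0 := by
      simp [Bz]
    rw [h1]
    positivity
  obtain ⟨w, hw, haw, hbw⟩ := exists_circuit_through hsum hnd ha hb hab
  have hwa : w a ≠ 0 := (mem_supp.mp haw).2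
  have hwb : w b ≠ 0 := (mem_supp.mp hbw).2
  set J : Finset ι := ((supp s w).erase b).erase a with hJ
  have haJ : a ∉ J := Finset.notMem_erase a _
  have hbJ : b ∉ J := fun h => Finset.notMem_erase b _ (Finset.mem_of_mem_erase h)
  have hJsupp : J ⊆ supp s w := fun x hx =>
    Finset.mem_of_mem_erase (Finset.mem_of_mem_erase hx)
  have hJs : J ⊆ s := hJsupp.trans supp_subset
  have hJa : ∀ x ∈ J, x ≠ a := fun x hx => Finset.ne_of_mem_erase hx
  have hJb : ∀ x ∈ J, x ≠ b := fun x hx =>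
    Finset.ne_of_mem_erase (Finset.mem_of_mem_erase hx)
  have hsupp_eq : supp s w = insert b (insert a J) := by
    rw [hJ, Finset.insert_erase (Finset.mem_erase.mpr ⟨hab, haw⟩), Finset.insert_erase hbw]
  have hbIns : b ∉ insert a J := by
    rw [Finset.mem_insert]
    push_neg
    exact ⟨fun h => hab h.symm, hbJ⟩
  -- the family
  set σ : Fin J.card → ι := fun j => (J.equivFin.symm j : ι) with hσ
  have hσJ : ∀ j, σ j ∈ J := fun j => (J.equivFin.symm j).2
  set g : Fin (J.card + 1) → ℂ[X] := Fin.cons (F a) (fun j => F (σ j)) with hg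
  have hg0 : g 0 = F a := rfl
  have hgsucc : ∀ j, g j.succ = F (σ j) := fun j => rfl
  have hσr : ∀ (x : ι) (hx : x ∈ J), σ (J.equivFin ⟨x, hx⟩) = x := by
    intro x hx
    rw [hσ]
    simp
  -- linear independence
  have hli : LinearIndependent ℂ g := by
    rw [Fintype.linearIndependent_iff]
    intro t ht
    set r : ι → ℂ := fun i => if hia : i = a then t 0 else
      if h : i ∈ J then t (Fin.succ (J.equivFin ⟨i, h⟩)) else 0 with hr
    have hra : r a = t 0 := by simp [hr]
    have hrσ : ∀ j, r (σ j) = t j.succ := by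
      intro j
      have h1 : σ j ∈ J := hσJ j
      have h2 : σ j ≠ a := hJa _ h1
      rw [hr]
      simp only [dif_neg h2, dif_pos h1]
      congr 1
      have : (⟨σ j, h1⟩ : {x // x ∈ J}) = J.equivFin.symm j := Subtype.ext rfl
      rw [this, Equiv.apply_symm_apply]
    have hrJ : ∀ x (hx : x ∈ J), r x = t (Fin.succ (J.equivFin ⟨x, hx⟩)) := by
      intro x hx
      rw [hr]
      simp [dif_neg (hJa x hx), dif_pos hx]
    have hrzero : ∀ i, i ≠ a → i ∉ J → r i = 0 := by
      intro i h1 h2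
      rw [hr]
      simp [dif_neg h1, dif_neg h2]
    have hrrel : Rel s F r := by
      constructor
      · intro i hi
        exact hrzero i (fun h => hi (h ▸ ha)) (fun h => hi (hJs h))
      · have hss : insert a J ⊆ s := Finset.insert_subset ha hJs
        rw [← Finset.sum_subset hss (fun x hx hxn => by
          rw [hrzero x (fun h => hxn (h ▸ Finset.mem_insert_self a J))
            (fun h => hxn (Finset.mem_insert_of_mem h)), zero_smul])]
        rw [Finset.sum_insert haJ, hra]
        have hJsum : ∑ x ∈ J, r x • F x = ∑ j : Fin J.card, t j.succ • F (σ j) := by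
          rw [← sum_equivFin J (fun x => r x • F x)]
          refine Finset.sum_congr rfl fun j _ => ?_
          rw [show ((J.equivFin.symm j : ι)) = σ j from rfl, hrσ j]
        rw [hJsum]
        rw [Fin.sum_univ_succ] at ht
        exact ht
    have hsuppr : supp s r ⊆ supp s w := by
      intro i hi
      rw [mem_supp] at hi
      by_cases h1 : i = a
      · subst h1; exact haw
      · by_cases h2 : i ∈ J
        · exact hJsupp h2
        · exact absurd (hrzero i h1 h2) hi.2
    obtain ⟨tt, htt⟩ := circ_minimal hw hrrel hsuppr
    have htt0 : tt = 0 := by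
      have hrb : r b = 0 := hrzero b (Ne.symm hab) hbJ
      have := congrFun htt b
      rw [hrb] at this
      have : tt * w b = 0 := by
        simpa using this.symm
      rcases mul_eq_zero.mp this with h | h
      · exact h
      · exact absurd h hwb
    have hr0 : r = 0 := by rw [htt, htt0, zero_smul]
    intro i
    refine Fin.cases ?_ ?_ i
    · rw [← hra, hr0]; rfl
    · intro j
      rw [← hrσ j, hr0]; rfl
  -- representation of F b
  have hrel := hw.1.2
  have hsupprel : ∑ i ∈ supp s w, w i • F i = 0 := by
    rw [Finset.sum_subset supp_subset (fun x hx hxn => by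
      rw [zero_of_mem_s_not_supp hx hxn, zero_smul])]
    exact hrel
  rw [hsupp_eq, Finset.sum_insert hbIns, Finset.sum_insert haJ] at hsupprel
  set c : Fin (J.card + 1) → ℂ := Fin.cons (-(w a)/(w b)) (fun j => -(w (σ j))/(w b)) with hc
  have hc0 : c 0 ≠ 0 := by
    rw [hc]
    simp only [Fin.cons_zero]
    exact div_ne_zero (neg_ne_zero.mpr hwa) hwb
  have hrep : F b = ∑ i, c i • g i := by
    rw [Fin.sum_univ_succ]
    have hJsum : ∑ j : Fin J.card, c j.succ • g j.succ
        = ∑ x ∈ J, (-(w x)/(w b)) • F x := by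
      rw [← sum_equivFin J (fun x => (-(w x)/(w b)) • F x)]
      exact Finset.sum_congr rfl fun j _ => rfl
    rw [hJsum, hg0]
    have key : w b • F b = (-(w a)) • F a + ∑ x ∈ J, (-(w x)) • F x := by
      have h1 : ∑ x ∈ J, (-(w x)) • F x = -(∑ x ∈ J, w x • F x) := by
        rw [← Finset.sum_neg_distrib]
        exact Finset.sum_congr rfl fun x _ => by rw [neg_smul]
      rw [h1, neg_smul]
      have := hsupprel
      abel_nf
      abel_nf at this
      linear_combination (norm := abel_nf) this
    have h2 : F b = (w b)⁻¹ • (w b • F b) := by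
      rw [smul_smul, inv_mul_cancel₀ hwb, one_smul]
    rw [h2, key, smul_add, Finset.smul_sum]
    congr 1
    · rw [smul_smul, hc]
      simp only [Fin.cons_zero]
      rw [div_eq_inv_mul]
    · exact Finset.sum_congr rfl fun x _ => by
        rw [smul_smul, div_eq_inv_mul]
  -- apply the core bound
  have hgT : ∀ i, ∀ α, (g i).IsRoot α → α ∈ T := by
    intro i
    refine Fin.cases ?_ ?_ i
    · rw [hg0]; exact hFT a ha
    · intro j; rw [hgsucc]; exact hFT _ (hJs (hσJ j))
  have hcore := core_bound T g hgT hli (hF0 b hb) (hFT b hb) 0 c hc0 hrep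
  rw [hg0] at hcore
  -- size bookkeeping
  have hcard : J.card + 2 ≤ s.card := by
    have h1 : (supp s w).card = J.card + 2 := by
      rw [hsupp_eq, Finset.card_insert_of_notMem hbIns, Finset.card_insert_of_notMem haJ]
    have h2 : (supp s w).card ≤ s.card := Finset.card_le_card supp_subset
    omega
  have hchoose : (J.card + 1).choose 2 ≤ (s.card - 1).choose 2 :=
    Nat.choose_le_choose 2 (by omega)
  calc Bz T (F a) (F b) ≤ ((J.card + 1).choose 2 : ℤ) * ((T.card : ℤ) - 1) := hcore
    _ ≤ ((J.card + 1).choose 2 : ℤ) * ((T.card : ℤ) + 1) := by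
        refine mul_le_mul_of_nonneg_left (by omega) (Int.ofNat_nonneg _)
    _ ≤ _ := by
        refine mul_le_mul_of_nonneg_right ?_ (by omega)
        exact_mod_cast hchoose

end Core
end BM


namespace BM
open Polynomial Finset

lemma height_le_Bz (T : Finset ℂ) {p q : ℂ[X]} (hp : p ≠ 0) (hq : q ≠ 0)
    (hpT : ∀ α, p.IsRoot α → α ∈ T) (hqT : ∀ α, q.IsRoot α → α ∈ T) :
    (ratFuncHeight (algebraMap ℂ[X] (RatFunc ℂ) p / algebraMap ℂ[X] (RatFunc ℂ) q) : ℤ)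
      ≤ Bz T p q := by
  classical
  set e : ℂ → ℕ := fun α => min (rootMultiplicity α p) (rootMultiplicity α q) with he
  set G : ℂ[X] := ∏ α ∈ T, (X - C α) ^ (e α) with hG
  have hcop : (↑T : Set ℂ).Pairwise (Function.onFun IsCoprime fun α => (X - C α) ^ (e α)) := by
    intro α _ β _ hne
    exact (isCoprime_X_sub_C_of_isUnit_sub ((sub_ne_zero.mpr hne).isUnit)).pow
  have hGp : G ∣ p := Finset.prod_dvd_of_coprime hcop (fun α _ =>
    dvd_trans (pow_dvd_pow _ (min_le_left _ _)) (pow_rootMultiplicity_dvd p α))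
  have hGq : G ∣ q := Finset.prod_dvd_of_coprime hcop (fun α _ =>
    dvd_trans (pow_dvd_pow _ (min_le_right _ _)) (pow_rootMultiplicity_dvd q α))
  obtain ⟨p1, hp1⟩ := hGp
  obtain ⟨q1, hq1⟩ := hGq
  have hG0 : G ≠ 0 := by
    rw [hG]
    exact Finset.prod_ne_zero_iff.mpr fun α _ => pow_ne_zero _ (X_sub_C_ne_zero α)
  have hp10 : p1 ≠ 0 := fun h => hp (by rw [hp1, h, mul_zero])
  have hq10 : q1 ≠ 0 := fun h => hq (by rw [hq1, h, mul_zero])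
  have hdiv : algebraMap ℂ[X] (RatFunc ℂ) p / algebraMap ℂ[X] (RatFunc ℂ) q
      = algebraMap ℂ[X] (RatFunc ℂ) p1 / algebraMap ℂ[X] (RatFunc ℂ) q1 := by
    rw [hp1, hq1, map_mul, map_mul,
      mul_div_mul_left _ _ (RatFunc.algebraMap_ne_zero hG0)]
  have hnum : (algebraMap ℂ[X] (RatFunc ℂ) p / algebraMap ℂ[X] (RatFunc ℂ) q).num ∣ p1 := by
    rw [hdiv]
    exact RatFunc.num_div_dvd p1 hq10
  have hden : (algebraMap ℂ[X] (RatFunc ℂ) p / algebraMap ℂ[X] (RatFunc ℂ) q).denom ∣ q1 := by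
    rw [hdiv]
    exact RatFunc.denom_div_dvd p1 q1
  have hnumle : (algebraMap ℂ[X] (RatFunc ℂ) p
      / algebraMap ℂ[X] (RatFunc ℂ) q).num.natDegree ≤ p1.natDegree :=
    natDegree_le_of_dvd hnum hp10
  have hdenle : (algebraMap ℂ[X] (RatFunc ℂ) p
      / algebraMap ℂ[X] (RatFunc ℂ) q).denom.natDegree ≤ q1.natDegree :=
    natDegree_le_of_dvd hden hq10
  have hdegG : G.natDegree = ∑ α ∈ T, e α := by
    rw [hG, natDegree_prod _ _ (fun α _ => pow_ne_zero _ (X_sub_C_ne_zero α))]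
    exact Finset.sum_congr rfl fun α _ => by
      rw [natDegree_pow, natDegree_X_sub_C, mul_one]
  have hdegp : p.natDegree = G.natDegree + p1.natDegree := by
    rw [hp1, natDegree_mul hG0 hp10]
  have hdegq : q.natDegree = G.natDegree + q1.natDegree := by
    rw [hq1, natDegree_mul hG0 hq10]
  have hdp : ∑ α ∈ T, rootMultiplicity α p = p.natDegree := sum_rootMult_eq hp hpT
  have hdq : ∑ α ∈ T, rootMultiplicity α q = q.natDegree := sum_rootMult_eq hq hqT
  have hsum_max : (∑ α ∈ T, max ((rootMultiplicity α q : ℤ)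
      - (rootMultiplicity α p : ℤ)) 0)
      = (q.natDegree : ℤ) - (∑ α ∈ T, (e α : ℕ) : ℕ) := by
    have h1 : ∀ α ∈ T, max ((rootMultiplicity α q : ℤ) - (rootMultiplicity α p : ℤ)) 0
        = (rootMultiplicity α q : ℤ) - (e α : ℤ) := by
      intro α _
      rw [he]
      have := min_le_left (rootMultiplicity α p) (rootMultiplicity α q)
      have := min_le_right (rootMultiplicity α p) (rootMultiplicity α q)
      push_cast [Nat.cast_min]
      omega
    rw [Finset.sum_congr rfl h1, Finset.sum_sub_distrib, ← hdq]
    push_cast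
    rfl
  have hub1 : (p1.natDegree : ℤ) ≤ Bz T p q := by
    rw [Bz, hsum_max]
    have h2 : ((p.natDegree : ℤ) - q.natDegree) ≤ max ((p.natDegree : ℤ) - q.natDegree) 0 :=
      le_max_left _ _
    have h3 := congrArg (Nat.cast : ℕ → ℤ) hdegG
    have h4 := congrArg (Nat.cast : ℕ → ℤ) hdegp
    have h5 := congrArg (Nat.cast : ℕ → ℤ) hdegq
    push_cast at h3 h4 h5
    omega
  have hub2 : (q1.natDegree : ℤ) ≤ Bz T p q := by
    rw [Bz, hsum_max]
    have h2 : (0:ℤ) ≤ max ((p.natDegree : ℤ) - q.natDegree) 0 := le_max_right _ _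
    have h3 := congrArg (Nat.cast : ℕ → ℤ) hdegG
    have h5 := congrArg (Nat.cast : ℕ → ℤ) hdegq
    push_cast at h3 h5
    omega
  rw [ratFuncHeight]
  push_cast
  rw [max_le_iff]
  constructor
  · calc ((algebraMap ℂ[X] (RatFunc ℂ) p / algebraMap ℂ[X] (RatFunc ℂ) q).num.natDegree : ℤ)
        ≤ (p1.natDegree : ℤ) := by exact_mod_cast hnumle
    _ ≤ _ := hub1
  · calc ((algebraMap ℂ[X] (RatFunc ℂ) p / algebraMap ℂ[X] (RatFunc ℂ) q).denom.natDegree : ℤ)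
        ≤ (q1.natDegree : ℤ) := by exact_mod_cast hdenle
    _ ≤ _ := hub2

end BM


/-- Brownawell–Masser over the genus-0 field ℂ(x): if `1 + u₁ + ⋯ + u_k = 0`
with no vanishing proper subsum, and all zeros and poles of each `uᵢ` lie in the
finite set `T ⊆ ℂ`, then `H(uᵢ) ≤ (k choose 2) * (|T| + 1)`. -/
theorem brownawell_masser_ratFunc (k : ℕ) (T : Finset ℂ) (u : Fin k → RatFunc ℂ)
    (hu : ∀ i, u i ≠ 0)
    (hT : ∀ i, ∀ α : ℂ, α ∉ T →
      (RatFunc.num (u i)).eval α ≠ 0 ∧ (RatFunc.denom (u i)).eval α ≠ 0)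
    (hsum : 1 + ∑ i, u i = 0)
    (hsub : ∀ s : Finset (Fin (k + 1)), s.Nonempty → s ≠ Finset.univ →
      ∑ i ∈ s, Fin.cons 1 u i ≠ 0) :
    ∀ i, ratFuncHeight (u i) ≤ Nat.choose k 2 * (T.card + 1) := by
  classical
  intro i0
  open Polynomial Finset BM in
  set A := algebraMap ℂ[X] (RatFunc ℂ) with hA
  set D : ℂ[X] := ∏ j, (u j).denom with hD
  have hD0 : D ≠ 0 := Finset.prod_ne_zero_iff.mpr fun j _ => RatFunc.denom_ne_zero (u j)
  have hAD0 : A D ≠ 0 := RatFunc.algebraMap_ne_zero hD0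
  set F : Fin (k+1) → ℂ[X] :=
    Fin.cons D (fun i => (u i).num * ∏ j ∈ Finset.univ.erase i, (u j).denom) with hF
  have key : ∀ j : Fin (k+1), A (F j) = Fin.cons (α := fun _ => RatFunc ℂ) 1 u j * A D := by
    refine Fin.cases ?_ ?_
    · rw [show F 0 = D from rfl, show Fin.cons (α := fun _ => RatFunc ℂ) 1 u 0 = 1 from rfl, one_mul]
    · intro i
      rw [show F i.succ = (u i).num * ∏ j ∈ Finset.univ.erase i, (u j).denom from rfl,
        show Fin.cons (α := fun _ => RatFunc ℂ) 1 u i.succ = u i from rfl]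
      have hsplit : D = (u i).denom * ∏ j ∈ Finset.univ.erase i, (u j).denom := by
        rw [hD, ← Finset.prod_erase_mul Finset.univ _ (Finset.mem_univ i), mul_comm]
      have hAden : A (u i).denom ≠ 0 :=
        RatFunc.algebraMap_ne_zero (RatFunc.denom_ne_zero (u i))
      have hnum_eq : A (u i).num = u i * A (u i).denom := by
        calc A (u i).num = A (u i).num / A (u i).denom * A (u i).denom :=
              (div_mul_cancel₀ _ hAden).symm
          _ = u i * A (u i).denom := by
              rw [show A (u i).num / A (u i).denom = u i from RatFunc.num_div_denom (u i)]
      rw [map_mul, hnum_eq, hsplit, map_mul]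
      ring
  have hFsum : ∑ j, F j = 0 := by
    apply IsFractionRing.injective ℂ[X] (RatFunc ℂ)
    rw [map_sum, map_zero]
    rw [Finset.sum_congr rfl fun j _ => key j, ← Finset.sum_mul]
    rw [show (∑ j : Fin (k+1), Fin.cons (α := fun _ => RatFunc ℂ) 1 u j) = 1 + ∑ i, u i from by
      rw [Fin.sum_univ_succ]; rfl]
    rw [hsum, zero_mul]
  have hFnd : ∀ t ⊆ Finset.univ, t.Nonempty → t ≠ Finset.univ → ∑ i ∈ t, F i ≠ 0 := by
    intro t _ htne htuniv heq
    apply hsub t htne htuniv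
    have h1 : A (∑ i ∈ t, F i) = 0 := by rw [heq, map_zero]
    rw [map_sum, Finset.sum_congr rfl fun j _ => key j, ← Finset.sum_mul] at h1
    rcases mul_eq_zero.mp h1 with h | h
    · exact h
    · exact absurd h hAD0
  have hF0 : ∀ j ∈ Finset.univ, F j ≠ 0 := by
    intro j _ h
    have h1 : A (F j) = 0 := by rw [h, map_zero]
    rw [key j] at h1
    rcases mul_eq_zero.mp h1 with h2 | h2
    · revert h2
      refine Fin.cases ?_ ?_ j
      · rw [show Fin.cons (α := fun _ => RatFunc ℂ) 1 u 0 = 1 from rfl]; exact one_ne_zero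
      · intro i
        rw [show Fin.cons (α := fun _ => RatFunc ℂ) 1 u i.succ = u i from rfl]
        exact hu i
    · exact hAD0 h2
  have hFT : ∀ j ∈ Finset.univ, ∀ α : ℂ, (F j).IsRoot α → α ∈ T := by
    intro j _ α hroot
    by_contra hα
    revert hroot
    refine Fin.cases ?_ ?_ j
    · rw [show F 0 = D from rfl]
      intro hroot
      rw [IsRoot, hD, eval_prod] at hroot
      obtain ⟨j', _, hj'⟩ := Finset.prod_eq_zero_iff.mp hroot
      exact (hT j' α hα).2 hj'
    · intro i hroot
      rw [show F i.succ = (u i).num * ∏ j ∈ Finset.univ.erase i, (u j).denom from rfl,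
        IsRoot, eval_mul] at hroot
      rcases mul_eq_zero.mp hroot with h | h
      · exact (hT i α hα).1 h
      · rw [eval_prod] at h
        obtain ⟨j', _, hj'⟩ := Finset.prod_eq_zero_iff.mp h
        exact (hT j' α hα).2 hj'
  have hmaster := BM.master T Finset.univ F hF0 hFT hFsum hFnd
    (Finset.mem_univ (Fin.succ i0)) (Finset.mem_univ 0)
  have hcard : (Finset.univ : Finset (Fin (k+1))).card - 1 = k := by
    rw [Finset.card_univ, Fintype.card_fin]
    omega
  rw [hcard] at hmaster
  have hu_eq : u i0 = A (F i0.succ) / A (F 0) := by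
    rw [key i0.succ, key 0,
      show Fin.cons (α := fun _ => RatFunc ℂ) 1 u i0.succ = u i0 from rfl,
      show Fin.cons (α := fun _ => RatFunc ℂ) 1 u 0 = 1 from rfl, one_mul,
      mul_div_assoc, div_self hAD0, mul_one]
  have hheight : (ratFuncHeight (u i0) : ℤ) ≤ BM.Bz T (F i0.succ) (F 0) := by
    rw [hu_eq]
    exact BM.height_le_Bz T (hF0 _ (Finset.mem_univ _)) (hF0 _ (Finset.mem_univ _))
      (hFT _ (Finset.mem_univ _)) (hFT _ (Finset.mem_univ _))
  have : (ratFuncHeight (u i0) : ℤ) ≤ (k.choose 2 : ℤ) * ((T.card : ℤ) + 1) :=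
    le_trans hheight hmaster
  have hfin : (ratFuncHeight (u i0) : ℤ) ≤ ((k.choose 2 * (T.card + 1) : ℕ) : ℤ) := by
    push_cast
    exact this
  exact_mod_cast hfin
end
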